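/- arXiv:0807.0484 — 5 statements merged into one kernel-verified Lean document; each statement's English description precedes it below -/
import Mathlib

section
/- Let s ≥ 3 be an integer and let φ : ℕ → ℝ be a nondecreasing nonnegative function such that λ_{s−2}(n) ≤ n·φ(n) for all n ≥ 1. Then for every integer n ≥ 1, λ_s(n) ≤ φ(n)·(ψ_s(2n, n) + 2n). -/
/-- The alternating list `a b a b ...` of length `l`. -/
def altList (a b : ℕ) : ℕ → List ℕ
  | 0 => []
  | l + 1 => a :: altList b a l

/-- `S` contains an alternation of length `l`: two distinct symbols occur as an
alternating (not necessarily contiguous) subsequence of length `l`. -/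
def HasAlt (S : List ℕ) (l : ℕ) : Prop :=
  ∃ a b : ℕ, a ≠ b ∧ (altList a b l).Sublist S

/-- A Davenport–Schinzel sequence of order `s`: no two adjacent equal entries and
no alternation of length `s + 2`. -/
def IsDS (s : ℕ) (S : List ℕ) : Prop :=
  List.Chain' (· ≠ ·) S ∧ ¬ HasAlt S (s + 2)

/-- `S` can be partitioned into at most `m` contiguous blocks, each consisting of
pairwise distinct symbols. -/
def HasBlocks (S : List ℕ) (m : ℕ) : Prop :=
  ∃ Bs : List (List ℕ), Bs.length ≤ m ∧ S = Bs.flatten ∧ ∀ B ∈ Bs, B.Nodup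

/-- `λ_s(n)`: maximum length of a Davenport–Schinzel sequence of order `s`
using at most `n` distinct symbols. -/
noncomputable def lambdaDS (s n : ℕ) : ℕ :=
  sSup {L | ∃ S : List ℕ, IsDS s S ∧ S.toFinset.card ≤ n ∧ S.length = L}

/-- `ψ_s(m,n)`: maximum length of a Davenport–Schinzel sequence of order `s` on at
most `n` distinct symbols partitionable into at most `m` blocks of distinct symbols. -/
noncomputable def psiDS (s m n : ℕ) : ℕ :=
  sSup {L | ∃ S : List ℕ, IsDS s S ∧ S.toFinset.card ≤ n ∧ HasBlocks S m ∧ S.length = L}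

/-- The Ackermann hierarchy: `A_1(n) = 2n`, and `A_k(n) = A_{k-1}^{(n)}(1)` for `k ≥ 2`. -/
def Ak : ℕ → ℕ → ℕ
  | 0, n => n + 1
  | 1, n => 2 * n
  | k + 2, n => (Ak (k + 1))^[n] 1

/-- The Ackermann function `A(n) = A_n(3)`. -/
def AckF (n : ℕ) : ℕ := Ak n 3

/-- `α_k(x) = min {n | A_k(n) ≥ x}`. -/
noncomputable def invAk (k x : ℕ) : ℕ := sInf {n | x ≤ Ak k n}

/-- `α(x) = min {n | A(n) ≥ x}`. -/
noncomputable def invA (x : ℕ) : ℕ := sInf {n | x ≤ AckF n}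

/-- An `ADS^s_k(m)`-sequence: at most `m` blocks of distinct symbols, every occurring
symbol appears at least `k` times, and no alternation of length `s + 2`. -/
def IsADS (s k m : ℕ) (S : List ℕ) : Prop :=
  HasBlocks S m ∧ (∀ a ∈ S, k ≤ S.count a) ∧ ¬ HasAlt S (s + 2)

/-- `N^s_k(m)`: the supremum (possibly infinite) of the number of distinct symbols
in an `ADS^s_k(m)`-sequence. -/
noncomputable def NADS (s k m : ℕ) : ℕ∞ :=
  sSup {c : ℕ∞ | ∃ S : List ℕ, IsADS s k m S ∧ c = (S.toFinset.card : ℕ∞)}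

/-- `S` is `r`-sparse: any at most `r` consecutive entries are pairwise distinct. -/
def Sparse (r : ℕ) (S : List ℕ) : Prop :=
  ∀ l : List ℕ, l <:+: S → l.length ≤ r → l.Nodup

/-- `S` contains the pattern `u`: some subsequence of `S` is an injectively renamed
copy of `u`. -/
def ContainsPat (S u : List ℕ) : Prop :=
  ∃ f : ℕ → ℕ, Set.InjOn f {a | a ∈ u} ∧ (u.map f).Sublist S

/-- `Ex_u(n)`: maximum length of an `r`-sparse `u`-free sequence on at most `n`
distinct symbols, where `r` is the number of distinct symbols of `u`. -/
noncomputable def ExDS (u : List ℕ) (n : ℕ) : ℕ :=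
  sSup {L | ∃ S : List ℕ, Sparse u.toFinset.card S ∧ ¬ ContainsPat S u ∧
    S.toFinset.card ≤ n ∧ S.length = L}

/-- An `(r,s)`-formation: a concatenation of `s` permutations of a single set of
`r` distinct symbols. -/
def IsFormation (r s : ℕ) (F : List ℕ) : Prop :=
  ∃ A : Finset ℕ, A.card = r ∧ ∃ Bs : List (List ℕ), Bs.length = s ∧
    (∀ B ∈ Bs, B.Nodup ∧ B.toFinset = A) ∧ F = Bs.flatten

/-- An `(r,s)`-formation-free sequence: `r`-sparse and containing no
`(r,s)`-formation as a subsequence. -/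
def FormationFree (r s : ℕ) (S : List ℕ) : Prop :=
  Sparse r S ∧ ¬ ∃ F : List ℕ, IsFormation r s F ∧ F.Sublist S

/-- `F_{r,s}(n)`: maximum length of an `(r,s)`-formation-free sequence on at most
`n` distinct symbols. -/
noncomputable def FDS (r s n : ℕ) : ℕ :=
  sSup {L | ∃ S : List ℕ, FormationFree r s S ∧ S.toFinset.card ≤ n ∧ S.length = L}

def altElt (a b : ℕ) (l : ℕ) : ℕ := if l % 2 = 0 then a else b

lemma altList_length (a b l : ℕ) : (altList a b l).length = l := by
  induction l generalizing a b with
  | zero => rfl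
  | succ k ih => simp [altList, ih]

lemma altElt_flip (a b k : ℕ) : altElt b a k = altElt a b (k+1) := by
  unfold altElt
  rcases Nat.even_or_odd k with h | h
  · simp [Nat.even_iff.mp h, Nat.succ_mod_two_eq_one_iff.mpr (Nat.even_iff.mp h)]
  · simp [Nat.odd_iff.mp h, Nat.succ_mod_two_eq_zero_iff.mpr (Nat.odd_iff.mp h)]

lemma altList_snoc (a b l : ℕ) : altList a b (l+1) = altList a b l ++ [altElt a b l] := by
  induction l generalizing a b with
  | zero => simp [altList, altElt]
  | succ k ih =>
    show a :: altList b a (k+1) = (a :: altList b a k) ++ [altElt a b (k+1)]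
    rw [ih b a, altElt_flip]
    simp

lemma altElt_ne (a b : ℕ) (h : a ≠ b) (k : ℕ) : altElt a b (k+1) ≠ altElt a b k := by
  unfold altElt
  rcases Nat.even_or_odd k with hp | hp
  · simp [Nat.even_iff.mp hp, Nat.succ_mod_two_eq_one_iff.mpr (Nat.even_iff.mp hp), h.symm]
  · simp [Nat.odd_iff.mp hp, Nat.succ_mod_two_eq_zero_iff.mpr (Nat.odd_iff.mp hp), h]

lemma altElt_or (a b k : ℕ) : altElt a b k = a ∨ altElt a b k = b := by
  unfold altElt; split <;> simp

lemma altList_prefix (a b : ℕ) {l l' : ℕ} (h : l ≤ l') :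
    (altList a b l).Sublist (altList a b l') := by
  induction l' with
  | zero => simpa [Nat.le_zero.mp h]
  | succ k ih =>
    rcases Nat.lt_or_ge l (k+1) with h' | h'
    · exact (ih (Nat.lt_succ_iff.mp h')).trans (by rw [altList_snoc]; exact List.sublist_append_left _ _)
    · have : l = k + 1 := le_antisymm h h'
      subst this; exact List.Sublist.refl _

lemma altElt_mem (a b : ℕ) {k l : ℕ} (h : k < l) : altElt a b k ∈ altList a b l := by
  have : altElt a b k ∈ altList a b (k+1) := by rw [altList_snoc]; simp
  exact (altList_prefix a b h).subset this

lemma hasAlt_mono {S : List ℕ} {k l : ℕ} (h : HasAlt S k) (hkl : l ≤ k) : HasAlt S l := by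
  obtain ⟨a, b, hab, hsub⟩ := h
  exact ⟨a, b, hab, (altList_prefix a b hkl).trans hsub⟩

lemma hasAlt_sublist {S T : List ℕ} (h : S.Sublist T) {l : ℕ} (hS : HasAlt S l) : HasAlt T l := by
  obtain ⟨a, b, hab, hsub⟩ := hS
  exact ⟨a, b, hab, hsub.trans h⟩

lemma mem_altList_x (x y : ℕ) {l : ℕ} (h : 1 ≤ l) : x ∈ altList x y l := by
  have := altElt_mem x y (k := 0) h
  simpa [altElt] using this

lemma mem_altList_y (x y : ℕ) {l : ℕ} (h : 2 ≤ l) : y ∈ altList x y l := by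
  have := altElt_mem x y (k := 1) h
  simpa [altElt] using this

lemma boundary_charge {s : ℕ} (hs : 3 ≤ s) {P C t R : List ℕ} {d : ℕ}
    (hHA : HasAlt (C ++ [d]) s) (hC : ¬ HasAlt C s)
    (hA : ¬ HasAlt (P ++ (C ++ ((d :: t) ++ R))) (s + 2)) :
    ∃ w, w ∈ C ∧ (w ∉ P ∨ (w ∉ t ++ R ∧ w ≠ d)) := by
  obtain ⟨s', rfl⟩ : ∃ s', s = s' + 1 := ⟨s - 1, by omega⟩
  have hs' : 2 ≤ s' := by omega
  obtain ⟨x, y, hxy, hsub⟩ := hHA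
  rw [List.sublist_append_iff] at hsub
  obtain ⟨l₁, l₂, heq, h1, h2⟩ := hsub
  rcases List.sublist_singleton.mp h2 with rfl | rfl
  · exact absurd ⟨x, y, hxy, by rw [heq] at *; simpa using h1⟩ hC
  · -- altList x y (s'+1) = l₁ ++ [d]
    rw [altList_snoc] at heq
    have hl : l₁ = altList x y s' ∧ d = altElt x y s' := by
      have := List.append_inj' heq.symm rfl
      exact ⟨this.1, by simpa using this.2⟩
    obtain ⟨rfl, hd⟩ := hl
    set a := altElt x y (s' + 1) with ha
    have had : a ≠ d := hd ▸ altElt_ne x y hxy s'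
    have hsubC : (altList x y (s' + 1)).Sublist (C ++ [d]) := by
      rw [altList_snoc, ← hd]
      exact h1.append (List.Sublist.refl [d])
    by_cases hmem : a ∈ t ++ R
    · -- case B : charge y, show y ∉ P
      have hyC : y ∈ C := h1.subset (mem_altList_y x y hs')
      refine ⟨y, hyC, Or.inl ?_⟩
      intro hyP
      apply hA
      refine ⟨y, x, hxy.symm, ?_⟩
      show (altList y x (s' + 1 + 2)).Sublist _
      have e1 : altList y x (s' + 1 + 2) = y :: altList x y (s' + 2) := rfl
      have e2 : (altList x y (s' + 2)).Sublist ((C ++ [d]) ++ (t ++ R)) := by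
        rw [altList_snoc]
        exact hsubC.append (List.singleton_sublist.mpr hmem)
      rw [e1]
      have h5 : (y :: altList x y (s' + 2)).Sublist (P ++ ((C ++ [d]) ++ (t ++ R))) :=
        (List.singleton_sublist.mpr hyP).append e2
      simpa using h5
    · -- case A : charge a
      have haC : a ∈ C := by
        rcases altElt_or x y (s' + 1) with h | h
        · exact h1.subset (h ▸ mem_altList_x x y (by omega))
        · exact h1.subset (h ▸ mem_altList_y x y hs')
      exact ⟨a, haC, Or.inr ⟨hmem, had⟩⟩

lemma hasAlt_length {S : List ℕ} {l : ℕ} (h : HasAlt S l) : l ≤ S.length := by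
  obtain ⟨a, b, _, hsub⟩ := h
  have := hsub.length_le
  rwa [altList_length] at this

lemma decomp {s : ℕ} (hs : 3 ≤ s) (N : ℕ) : ∀ S : List ℕ, S.length ≤ N →
    ∃ Cs : List (List ℕ), S = Cs.flatten ∧ (∀ C ∈ Cs, C ≠ [] ∧ ¬ HasAlt C s) ∧
      List.Chain' (fun C D => ∃ d t, D = d :: t ∧ HasAlt (C ++ [d]) s) Cs := by
  induction N with
  | zero =>
    intro S hlen
    have : S = [] := List.length_eq_zero_iff.mp (Nat.le_zero.mp hlen)
    exact ⟨[], by simp [this], by simp, by simp [List.Chain']⟩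
  | succ N ih =>
    intro S hlen
    rcases List.eq_nil_or_concat S with rfl | ⟨_, _, hSc⟩
    · exact ⟨[], by simp, by simp, by simp [List.Chain']⟩
    have hSne : S ≠ [] := by rintro rfl; simp at hSc
    have hSlen : 1 ≤ S.length := List.length_pos_iff.mpr hSne
    have key : ∃ k, 1 ≤ k ∧ k ≤ S.length ∧ ¬ HasAlt (S.take k) s ∧
        (k < S.length → HasAlt (S.take (k + 1)) s) := by
      classical
      have hP1 : ¬ HasAlt (S.take 1) s := by
        intro h
        have h1 := hasAlt_length h
        have h2 : (S.take 1).length ≤ 1 := by simp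
        omega
      refine ⟨Nat.findGreatest (fun k => ¬ HasAlt (S.take k) s) S.length,
        Nat.le_findGreatest (P := fun k => ¬ HasAlt (S.take k) s) hSlen hP1,
        Nat.findGreatest_le _,
        Nat.findGreatest_spec (P := fun k => ¬ HasAlt (S.take k) s) hSlen hP1, ?_⟩
      intro hlt
      by_contra h
      exact (Nat.findGreatest_is_greatest (P := fun k => ¬ HasAlt (S.take k) s)
        (n := S.length) (by omega) (by omega)) h
    obtain ⟨k, hk1, hkle, hkC, hmaxk⟩ := key
    have hkne : S.take k ≠ [] := by
      intro h
      have := congrArg List.length h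
      simp at this
      rcases this with h' | h'
      · omega
      · exact hSne h'
    have hdroplen : (S.drop k).length ≤ N := by
      rw [List.length_drop]; omega
    obtain ⟨Cs', hflat, hprops, hchain⟩ := ih (S.drop k) hdroplen
    by_cases hrest : S.drop k = []
    · refine ⟨[S.take k], ?_, ?_, ?_⟩
      · have := List.take_append_drop k S
        rw [hrest] at this
        simpa using this.symm
      · intro C hC; simp at hC; subst hC; exact ⟨hkne, hkC⟩
      · simp [List.Chain']
    · have hklt : k < S.length := by
        by_contra h
        push_neg at h
        rw [List.drop_eq_nil_of_le h] at hrest; exact hrest rfl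
      have hmax : HasAlt (S.take (k + 1)) s := hmaxk hklt
      have htake : S.take (k + 1) = S.take k ++ [S[k]] := by
        rw [List.take_succ, List.getElem?_eq_getElem hklt]
        rfl
      have hdrop : S.drop k = S[k] :: S.drop (k + 1) := List.drop_eq_getElem_cons hklt
      refine ⟨S.take k :: Cs', ?_, ?_, ?_⟩
      · rw [List.flatten_cons, ← hflat, List.take_append_drop]
      · intro C hC
        rcases List.mem_cons.mp hC with rfl | hC
        · exact ⟨hkne, hkC⟩
        · exact hprops C hC
      · rw [List.Chain', List.isChain_cons]
        refine ⟨?_, hchain⟩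
        intro B hB
        obtain ⟨Cs'', hCs''⟩ : ∃ Cs'', Cs' = B :: Cs'' := by
          cases Cs' with
          | nil => simp at hB
          | cons C0 Cs'' =>
            simp [List.head?] at hB
            exact ⟨Cs'', by rw [hB]⟩
        have hBne : B ≠ [] := (hprops B (by simp [hCs''])).1
        obtain ⟨d, t, rfl⟩ : ∃ d t, B = d :: t := by
          cases B with
          | nil => exact absurd rfl hBne
          | cons d t => exact ⟨d, t, rfl⟩
        have hdk : d = S[k] := by
          have h2 : (S.drop k).head? = some d := by rw [hflat, hCs'']; simp
          rw [hdrop, List.head?_cons] at h2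
          exact (Option.some_inj.mp h2).symm
        refine ⟨d, t, rfl, ?_⟩
        rw [hdk, ← htake]
        exact hmax

lemma chunk_count {s : ℕ} (hs : 3 ≤ s) (Cs : List (List ℕ))
    (hprops : ∀ C ∈ Cs, C ≠ [] ∧ ¬ HasAlt C s)
    (hchain : List.Chain' (fun C D => ∃ d t, D = d :: t ∧ HasAlt (C ++ [d]) s) Cs)
    (hA : ¬ HasAlt Cs.flatten (s + 2)) :
    Cs.length ≤ 2 * Cs.flatten.toFinset.card := by
  classical
  rcases eq_or_ne Cs [] with rfl | hCs_ne
  · simp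
  set m := Cs.length with hm
  have hm1 : 1 ≤ m := List.length_pos_iff.mpr hCs_ne
  set G : ℕ → List ℕ := fun j => Cs.getD j [] with hG
  have hGel : ∀ j (h : j < m), G j = Cs[j] := fun j h => List.getD_eq_getElem Cs [] h
  have hGnil : ∀ j, m ≤ j → G j = [] := fun j h => List.getD_eq_default Cs [] h
  have hGmem : ∀ j, j < m → G j ∈ Cs := by
    intro j hj
    rw [hGel j hj]
    exact List.getElem_mem hj
  have hGsub : ∀ j, j < m → ∀ w ∈ G j, w ∈ Cs.flatten := by
    intro j hj w hw
    exact List.mem_flatten.mpr ⟨G j, hGmem j hj, hw⟩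
  -- main per-boundary statement
  have main : ∀ i, i + 1 < m → ∃ w, w ∈ G i ∧
      ((∀ j, j < i → w ∉ G j) ∨ (∀ j, i < j → w ∉ G j)) := by
    intro i hi
    have hrel := List.isChain_iff_getElem.mp hchain i (by omega)
    obtain ⟨d, t, hdt, hHA⟩ := hrel
    have hCprops := hprops Cs[i] (List.getElem_mem (by omega))
    have hflat_eq : Cs.flatten =
        (Cs.take i).flatten ++ (Cs[i] ++ ((d :: t) ++ (Cs.drop (i + 2)).flatten)) := by
      conv_lhs => rw [← List.take_append_drop i Cs]
      rw [List.drop_eq_getElem_cons (by omega : i < Cs.length),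
        List.drop_eq_getElem_cons (by omega : i + 1 < Cs.length)]
      simp [hdt]
    have hA' : ¬ HasAlt ((Cs.take i).flatten ++
        (Cs[i] ++ ((d :: t) ++ (Cs.drop (i + 2)).flatten))) (s + 2) := by
      rw [← hflat_eq]; exact hA
    obtain ⟨w, hwC, hw⟩ := boundary_charge hs hHA hCprops.2 hA'
    refine ⟨w, by rw [hGel i (by omega)]; exact hwC, ?_⟩
    rcases hw with h | h
    · left
      intro j hj hmem
      apply h
      refine List.mem_flatten.mpr ⟨G j, ?_, hmem⟩
      rw [hGel j (by omega)]
      have hjt : j < (Cs.take i).length := by simp [hm]; omega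
      have := List.getElem_mem hjt
      rwa [List.getElem_take] at this
    · right
      intro j hij hmem
      rcases Nat.lt_or_ge j m with hjm | hjm
      · rw [hGel j hjm] at hmem
        rcases Nat.lt_or_ge j (i + 2) with hj2 | hj2
        · have : j = i + 1 := by omega
          subst this
          rw [hdt] at hmem
          rcases List.mem_cons.mp hmem with rfl | hmt
          · exact h.2 rfl
          · exact h.1 (List.mem_append.mpr (Or.inl hmt))
        · apply h.1
          apply List.mem_append.mpr
          right
          refine List.mem_flatten.mpr ⟨Cs[j], ?_, hmem⟩
          have hjd : j - (i + 2) < (Cs.drop (i + 2)).length := by simp [hm]; omega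
          have h2 := List.getElem_mem hjd
          rw [List.getElem_drop] at h2
          convert h2 using 2
          omega
      · rw [hGnil j hjm] at hmem
        simp at hmem
  -- choose an element of the last chunk
  obtain ⟨z, hz⟩ := List.exists_mem_of_ne_nil (G (m - 1))
    (by rw [hGel (m - 1) (by omega)]; exact (hprops _ (List.getElem_mem (by omega))).1)
  have hzA : z ∈ Cs.flatten.toFinset := List.mem_toFinset.mpr (hGsub (m - 1) (by omega) z hz)
  -- packaged choice
  have main2 : ∀ i, i + 1 < m → ∃ p : Bool × ℕ, p.2 ∈ G i ∧
      ((p.1 = false ∧ ∀ j, j < i → p.2 ∉ G j) ∨ (p.1 = true ∧ ∀ j, i < j → p.2 ∉ G j)) := by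
    intro i hi
    obtain ⟨w, hw, h | h⟩ := main i hi
    · exact ⟨(false, w), hw, Or.inl ⟨rfl, h⟩⟩
    · exact ⟨(true, w), hw, Or.inr ⟨rfl, h⟩⟩
  set f : ℕ → Bool × ℕ := fun i =>
    if h : i + 1 < m then (main2 i h).choose else (false, 0) with hf
  have hfspec : ∀ i (h : i + 1 < m), (f i).2 ∈ G i ∧
      (((f i).1 = false ∧ ∀ j, j < i → (f i).2 ∉ G j) ∨
       ((f i).1 = true ∧ ∀ j, i < j → (f i).2 ∉ G j)) := by
    intro i h
    rw [hf]
    simp only [dif_pos h]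
    exact (main2 i h).choose_spec
  set A := Cs.flatten.toFinset with hA2
  have hcard : (Finset.range (m - 1)).card ≤
      ({false} ×ˢ A ∪ {true} ×ˢ (A.erase z)).card := by
    apply Finset.card_le_card_of_injOn f
    · intro i hi
      rw [Finset.mem_coe, Finset.mem_range] at hi
      have hi' : i + 1 < m := by omega
      obtain ⟨hmem, hdisj⟩ := hfspec i hi'
      have hwA : (f i).2 ∈ A := List.mem_toFinset.mpr (hGsub i (by omega) _ hmem)
      rcases hdisj with ⟨hb, _⟩ | ⟨hb, hnot⟩
      · apply Finset.mem_union_left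
        rw [Finset.mem_product, hb]
        exact ⟨Finset.mem_singleton_self _, hwA⟩
      · apply Finset.mem_union_right
        rw [Finset.mem_product, hb]
        refine ⟨Finset.mem_singleton_self _, Finset.mem_erase.mpr ⟨?_, hwA⟩⟩
        intro hwz
        exact hnot (m - 1) (by omega) (hwz ▸ hz)
    · intro i hi i' hi' heq
      simp only [Finset.coe_range, Set.mem_Iio] at hi hi'
      have hib : i + 1 < m := by omega
      have hib' : i' + 1 < m := by omega
      obtain ⟨hmem, hdisj⟩ := hfspec i hib
      obtain ⟨hmem', hdisj'⟩ := hfspec i' hib'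
      by_contra hne
      rcases hdisj with ⟨hb, hnot⟩ | ⟨hb, hnot⟩ <;>
        rcases hdisj' with ⟨hb', hnot'⟩ | ⟨hb', hnot'⟩
      · rcases Nat.lt_or_ge i i' with hlt | hge
        · exact hnot' i hlt (heq ▸ hmem)
        · exact hnot i' (by omega) (heq ▸ hmem')
      · rw [heq, hb'] at hb; simp at hb
      · rw [heq, hb'] at hb; simp at hb
      · rcases Nat.lt_or_ge i i' with hlt | hge
        · exact hnot i' hlt (heq ▸ hmem')
        · exact hnot' i (by omega) (heq ▸ hmem)
  have h1 : ({false} ×ˢ A ∪ {true} ×ˢ (A.erase z)).card ≤ A.card + (A.card - 1) := by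
    refine (Finset.card_union_le _ _).trans ?_
    rw [Finset.card_product, Finset.card_product, Finset.card_singleton,
      Finset.card_erase_of_mem hzA]
    simp
  have h2 : 1 ≤ A.card := Finset.card_pos.mpr ⟨z, hzA⟩
  have h3 : (Finset.range (m - 1)).card = m - 1 := Finset.card_range _
  show m ≤ 2 * A.card
  omega

lemma flatten_map_dedup_sublist (Cs : List (List ℕ)) :
    (Cs.map List.dedup).flatten.Sublist Cs.flatten := by
  induction Cs with
  | nil => simp
  | cons C Cs ih => simpa using (List.dedup_sublist C).append ih

lemma fix_blocks : ∀ Bs : List (List ℕ), (∀ B ∈ Bs, B.Nodup) →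
    ∃ Bs' : List (List ℕ), Bs'.length ≤ Bs.length ∧ (∀ B ∈ Bs', B.Nodup) ∧
      Bs'.flatten.Sublist Bs.flatten ∧ List.Chain' (· ≠ ·) Bs'.flatten ∧
      Bs.flatten.length ≤ Bs'.flatten.length + (Bs.length - 1) := by
  intro Bs
  induction Bs with
  | nil => exact fun _ => ⟨[], by simp, by simp, by simp, by simp [List.Chain'], by simp⟩
  | cons B Bs ih =>
    intro hnd
    obtain ⟨Bs', hlen, hnd', hsub, hch, hcount⟩ := ih (fun B hB => hnd B (by simp [hB]))
    rcases List.eq_nil_or_concat B with rfl | ⟨E, e, hBe⟩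
    · -- empty head block: keep Bs'
      refine ⟨Bs', by simp; omega, hnd', by simpa using hsub, hch, ?_⟩
      simp only [List.flatten_cons, List.nil_append, List.length_cons]
      omega
    rw [List.concat_eq_append] at hBe
    subst hBe
    have hBnd : (E ++ [e]).Nodup := hnd _ (by simp)
    have hEnd : E.Nodup := List.Nodup.sublist (List.sublist_append_left E [e]) hBnd
    have heE : e ∉ E := by
      have := List.disjoint_of_nodup_append hBnd
      intro h; exact this h (by simp)
    by_cases hTnil : Bs'.flatten = []
    · refine ⟨[E ++ [e]], by simp, by intro B hB; simp at hB; subst hB; exact hBnd, ?_, ?_, ?_⟩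
      · simpa using List.sublist_append_left (E ++ [e]) Bs.flatten
      · simpa [List.Chain'] using hBnd.isChain
      · have h9 : Bs.flatten.length ≤ Bs.length - 1 := by
          rw [hTnil] at hcount
          simpa using hcount
        simp only [List.flatten_cons, List.flatten_nil, List.append_nil, List.length_append,
          List.length_cons]
        omega
    · obtain ⟨x, T', hT⟩ := List.exists_cons_of_ne_nil hTnil
      have hBs1 : 1 ≤ Bs.length := by
        rcases Bs with _ | ⟨B0, Bs0⟩
        · simp at hsub
          exact absurd (List.flatten_eq_nil_iff.mpr hsub) hTnil
        · simp
      by_cases hex : e = x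
      · -- drop e from the head block
        refine ⟨E :: Bs', by simp; omega, ?_, ?_, ?_, ?_⟩
        · intro B hB
          rcases List.mem_cons.mp hB with rfl | hB
          · exact hEnd
          · exact hnd' B hB
        · simp only [List.flatten_cons]
          exact ((List.sublist_append_left E [e]).append hsub)
        · simp only [List.flatten_cons]
          rw [List.Chain', List.isChain_append]
          refine ⟨hEnd.isChain, hch, ?_⟩
          intro a ha b hb
          rw [hT] at hb
          simp at hb
          subst hb
          have haE : a ∈ E := List.mem_of_mem_getLast? ha
          rw [← hex]
          intro h
          exact heE (h ▸ haE)
        · simp only [List.flatten_cons, List.length_append, List.length_cons, List.length_nil]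
          omega
      · -- keep full head block
        refine ⟨(E ++ [e]) :: Bs', by simp; omega, ?_, ?_, ?_, ?_⟩
        · intro B hB
          rcases List.mem_cons.mp hB with rfl | hB
          · exact hBnd
          · exact hnd' B hB
        · simp only [List.flatten_cons]
          exact List.Sublist.append (List.Sublist.refl _) hsub
        · simp only [List.flatten_cons]
          rw [List.Chain', List.isChain_append]
          refine ⟨hBnd.isChain, hch, ?_⟩
          intro a ha b hb
          rw [List.getLast?_concat] at ha
          rw [hT] at hb
          simp at ha hb
          subst ha; subst hb
          exact hex
        · simp only [List.flatten_cons, List.length_append, List.length_cons, List.length_nil]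
          omega


/-- If `s ≥ 3` and `φ` is a nondecreasing nonnegative function with `λ_{s-2}(n) ≤ n·φ(n)`
for all `n ≥ 1`, then `λ_s(n) ≤ φ(n)·(ψ_s(2n,n) + 2n)` for every `n ≥ 1`. -/
theorem lambda_to_psi (s : ℕ) (hs : 3 ≤ s) (φ : ℕ → ℝ) (hmono : Monotone φ)
    (hpos : ∀ n : ℕ, 0 ≤ φ n)
    (hbound : ∀ n : ℕ, 1 ≤ n → (lambdaDS (s - 2) n : ℝ) ≤ (n : ℝ) * φ n) :
    ∀ n : ℕ, 1 ≤ n →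
      (lambdaDS s n : ℝ) ≤ φ n * ((psiDS s (2 * n) n : ℝ) + 2 * (n : ℝ)) := by
  intro n hn
  classical
  have hrhs : 0 ≤ φ n * ((psiDS s (2 * n) n : ℝ) + 2 * (n : ℝ)) := by
    apply mul_nonneg (hpos n)
    positivity
  set T : Set ℕ := {L | ∃ S : List ℕ, IsDS s S ∧ S.toFinset.card ≤ n ∧ S.length = L} with hTdef
  by_cases hbdd : BddAbove T
  swap
  · have h0 : lambdaDS s n = 0 := by
      show sSup T = 0
      rw [csSup_of_not_bddAbove hbdd, csSup_empty]
      rfl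
    rw [h0]
    simpa using hrhs
  · have h0T : (0 : ℕ) ∈ T := by
      refine ⟨[], ⟨by simp [List.Chain'], ?_⟩, by simp, rfl⟩
      intro h
      have := hasAlt_length h
      simp at this
    have hmem : sSup T ∈ T := Nat.sSup_mem ⟨0, h0T⟩ hbdd
    obtain ⟨S, ⟨hchainS, hAS⟩, hScard, hSlen⟩ := hmem
    have hgoal : (S.length : ℝ) ≤ φ n * ((psiDS s (2 * n) n : ℝ) + 2 * (n : ℝ)) := by
      obtain ⟨Cs, hSflat, hprops, hchain⟩ := decomp hs S.length S le_rfl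
      subst hSflat
      -- number of chunks
      have hmB : Cs.length ≤ 2 * Cs.flatten.toFinset.card :=
        chunk_count hs Cs hprops hchain hAS
      have hm2n : Cs.length ≤ 2 * n := by omega
      -- blocked companion sequence
      have hndBs : ∀ B ∈ Cs.map List.dedup, B.Nodup := by
        intro B hB
        simp only [List.mem_map] at hB
        obtain ⟨C, _, rfl⟩ := hB
        exact List.nodup_dedup C
      obtain ⟨Bs', hlen', hnd', hsub', hch', hcount'⟩ := fix_blocks (Cs.map List.dedup) hndBs
      have hsubS : Bs'.flatten.Sublist Cs.flatten :=
        hsub'.trans (flatten_map_dedup_sublist Cs)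
      have hΨT : {L | ∃ X : List ℕ, IsDS s X ∧ X.toFinset.card ≤ n ∧ HasBlocks X (2 * n) ∧
          X.length = L} ⊆ T := by
        rintro L ⟨X, h1, h2, _, h4⟩
        exact ⟨X, h1, h2, h4⟩
      have hfin_sub : Bs'.flatten.toFinset ⊆ Cs.flatten.toFinset := fun x hx =>
        List.mem_toFinset.mpr (hsubS.subset (List.mem_toFinset.mp hx))
      have hψ : Bs'.flatten.length ≤ psiDS s (2 * n) n := by
        apply le_csSup (hbdd.mono hΨT)
        refine ⟨Bs'.flatten, ⟨hch', fun h => hAS (hasAlt_sublist hsubS h)⟩,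
          le_trans (Finset.card_le_card hfin_sub) hScard,
          ⟨Bs', ?_, rfl, hnd'⟩, rfl⟩
        have : (Cs.map List.dedup).length = Cs.length := by simp
        omega
      have hsumdedup : (Cs.map List.dedup).flatten.length ≤ psiDS s (2 * n) n + 2 * n := by
        have hl2 : (Cs.map List.dedup).length = Cs.length := by simp
        omega
      -- per-chunk bound
      have hperchunk : ∀ C ∈ Cs, (C.length : ℝ) ≤ (C.dedup.length : ℝ) * φ n := by
        intro C hC
        have hCsubS : ∀ x ∈ C, x ∈ Cs.flatten := fun x hx =>
          List.mem_flatten.mpr ⟨C, hC, hx⟩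
        have hnC_le : C.toFinset.card ≤ n := by
          refine le_trans (Finset.card_le_card fun x hx => ?_) hScard
          exact List.mem_toFinset.mpr (hCsubS x (List.mem_toFinset.mp hx))
        have hnC_pos : 1 ≤ C.toFinset.card := by
          obtain ⟨x, hx⟩ := List.exists_mem_of_ne_nil C (hprops C hC).1
          exact Finset.card_pos.mpr ⟨x, List.mem_toFinset.mpr hx⟩
        have hsubT : {L | ∃ X : List ℕ, IsDS (s - 2) X ∧ X.toFinset.card ≤ C.toFinset.card ∧
            X.length = L} ⊆ T := by
          rintro L ⟨X, ⟨hX1, hX2⟩, hX3, hX4⟩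
          refine ⟨X, ⟨hX1, fun h => hX2 (hasAlt_mono h (by omega))⟩, le_trans hX3 hnC_le, hX4⟩
        have hCmem : C.length ∈ {L | ∃ X : List ℕ, IsDS (s - 2) X ∧
            X.toFinset.card ≤ C.toFinset.card ∧ X.length = L} := by
          refine ⟨C, ⟨hchainS.infix (List.infix_of_mem_flatten hC), ?_⟩, le_rfl, rfl⟩
          have : s - 2 + 2 = s := by omega
          rw [this]
          exact (hprops C hC).2
        have hlam : C.length ≤ lambdaDS (s - 2) (C.toFinset.card) :=
          le_csSup (hbdd.mono hsubT) hCmem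
        have h1 : (C.length : ℝ) ≤ (C.toFinset.card : ℝ) * φ (C.toFinset.card) :=
          le_trans (Nat.cast_le.mpr hlam) (hbound _ hnC_pos)
        have h2 : (C.toFinset.card : ℝ) * φ (C.toFinset.card) ≤ (C.toFinset.card : ℝ) * φ n :=
          mul_le_mul_of_nonneg_left (hmono hnC_le) (by positivity)
        rw [List.card_toFinset] at h1 h2
        exact le_trans h1 h2
      -- sum it up
      have hlen_eq : (Cs.flatten.length : ℝ) = (Cs.map (fun C => (C.length : ℝ))).sum := by
        rw [List.length_flatten, Nat.cast_list_sum, List.map_map]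
        rfl
      have hded_eq : ((Cs.map List.dedup).flatten.length : ℝ) =
          (Cs.map (fun C => (C.dedup.length : ℝ))).sum := by
        rw [List.length_flatten, Nat.cast_list_sum, List.map_map, List.map_map]
        rfl
      calc (Cs.flatten.length : ℝ)
          = (Cs.map (fun C => (C.length : ℝ))).sum := hlen_eq
        _ ≤ (Cs.map (fun C => (C.dedup.length : ℝ) * φ n)).sum := List.sum_le_sum hperchunk
        _ = (Cs.map (fun C => (C.dedup.length : ℝ))).sum * φ n :=
            List.sum_map_mul_right Cs _ _
        _ = ((Cs.map List.dedup).flatten.length : ℝ) * φ n := by rw [hded_eq]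
        _ ≤ ((psiDS s (2 * n) n : ℝ) + 2 * (n : ℝ)) * φ n := by
            apply mul_le_mul_of_nonneg_right _ (hpos n)
            have := hsumdedup
            push_cast
            exact_mod_cast Nat.cast_le.mpr this |>.trans (by push_cast; linarith)
        _ = φ n * ((psiDS s (2 * n) n : ℝ) + 2 * (n : ℝ)) := mul_comm _ _
    calc (lambdaDS s n : ℝ) = (S.length : ℝ) := by rw [hSlen]; rfl
      _ ≤ _ := hgoal
end

section
/- There exists an absolute constant c such that for all integers k ≥ 2 and m, n ≥ 1, ψ_3(m,n) ≤ c·(k·m·α_k(m) + k·n). -/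
namespace DS


lemma ak_succ (k j : ℕ) : Ak (k + 2) (j + 1) = Ak (k + 1) (Ak (k + 2) j) := by
  show (Ak (k+1))^[j+1] 1 = _
  rw [Function.iterate_succ_apply']
  rfl

lemma ak_zero (k : ℕ) : Ak (k + 2) 0 = 1 := rfl

/-- `A_{k+1}(y) ≥ y + 1` for `y ≥ 1`. -/
lemma ak_add_one_le : ∀ k y, 1 ≤ y → y + 1 ≤ Ak (k + 1) y := by
  intro k
  induction k with
  | zero => intro y hy; show y + 1 ≤ 2 * y; omega
  | succ k ih =>
    intro y hy
    induction y with
    | zero => omega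
    | succ y ihy =>
      rcases Nat.eq_zero_or_pos y with rfl | hy'
      · show 2 ≤ Ak (k + 2) 1
        rw [ak_succ, ak_zero]
        have := ih 1 le_rfl
        omega
      · have h1 : y + 1 ≤ Ak (k + 2) y := ihy hy'
        rw [ak_succ]
        have h2 : Ak (k + 2) y + 1 ≤ Ak (k + 1) (Ak (k + 2) y) := ih _ (by omega)
        omega

lemma ak_ge_one (k y : ℕ) : 1 ≤ Ak (k + 2) y := by
  induction y with
  | zero => simp [ak_zero]
  | succ y ih =>
    rw [ak_succ]
    have := ak_add_one_le k (Ak (k + 2) y) ih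
    omega

lemma ak_self_lt (k y : ℕ) : y < Ak (k + 2) y := by
  induction y with
  | zero => simp [ak_zero]
  | succ y ih =>
    rw [ak_succ]
    have h1 : 1 ≤ Ak (k + 2) y := ak_ge_one k y
    have := ak_add_one_le k (Ak (k + 2) y) h1
    omega

lemma ak_mono (k : ℕ) : Monotone (Ak (k + 2)) := by
  apply monotone_nat_of_le_succ
  intro y
  rw [ak_succ]
  have h1 : 1 ≤ Ak (k + 2) y := ak_ge_one k y
  have := ak_add_one_le k (Ak (k + 2) y) h1
  omega

/-- `A_k(n) ≤ A_{k+1}(n)` for `k ≥ 2`. -/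
lemma ak_le_succ_level (k n : ℕ) : Ak (k + 2) n ≤ Ak (k + 3) n := by
  cases n with
  | zero => simp [ak_zero]
  | succ n =>
    rw [ak_succ (k+1)]
    have h1 : n + 1 ≤ Ak (k + 3) n := ak_self_lt (k+1) n
    exact ak_mono k h1

/-- `A_2(n) ≤ A_k(n)` for any `k ≥ 2`. -/
lemma ak_two_le (k n : ℕ) : Ak 2 n ≤ Ak (k + 2) n := by
  induction k with
  | zero => exact le_refl _
  | succ k ih => exact le_trans ih (ak_le_succ_level k n)

lemma ak2_eq (n : ℕ) : Ak 2 n = 2 ^ n := by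
  induction n with
  | zero => rfl
  | succ n ih =>
    rw [ak_succ 0, ih]
    show 2 * 2 ^ n = 2 ^ (n+1)
    ring

lemma invAk_mem (k x : ℕ) : x ≤ Ak (k + 2) (invAk (k + 2) x) := by
  have hne : {n | x ≤ Ak (k + 2) n}.Nonempty := ⟨x, le_of_lt (ak_self_lt k x)⟩
  exact Nat.sInf_mem hne

lemma invAk_le (k x j : ℕ) (h : x ≤ Ak (k + 2) j) : invAk (k + 2) x ≤ j :=
  Nat.sInf_le h

lemma invAk_mono (k : ℕ) {x y : ℕ} (h : x ≤ y) : invAk (k + 2) x ≤ invAk (k + 2) y :=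
  invAk_le k x _ (le_trans h (invAk_mem k y))

lemma invAk_anti (k x : ℕ) : invAk (k + 2) x ≤ invAk 2 x := by
  apply invAk_le
  exact le_trans (invAk_mem 0 x) (ak_two_le k _)

lemma invAk_pow (x : ℕ) : x ≤ 2 ^ invAk 2 x := by
  have := invAk_mem 0 x
  rwa [ak2_eq] at this

lemma invAk_min (x j : ℕ) (h : x ≤ 2 ^ j) : invAk 2 x ≤ j := by
  apply invAk_le; rwa [ak2_eq]



def fC : ℕ → ℕ
  | 0 => 4
  | 1 => 4
  | 2 => 4
  | k + 3 => max (fC (k+2) + 4) (4 * (2 * Nat.clog 2 (fC (k+2) + 1) + 13))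

lemma fC_ge4 : ∀ k, 4 ≤ fC k
  | 0 => le_rfl
  | 1 => le_rfl
  | 2 => le_rfl
  | k + 3 => le_trans (by have := fC_ge4 (k+2); omega) (le_max_left _ _)

lemma fC_step (k : ℕ) : fC (k + 2) + 4 ≤ fC (k + 3) := le_max_left _ _

lemma fC_bad (k : ℕ) : 4 * (2 * Nat.clog 2 (fC (k+2) + 1) + 13) ≤ fC (k + 3) := le_max_right _ _

lemma clog_le_self (n : ℕ) : Nat.clog 2 n ≤ n := by
  rcases Nat.eq_zero_or_pos n with rfl | hn
  · simp
  · exact (Nat.clog_le_iff_le_pow one_lt_two).2 (le_of_lt (Nat.lt_two_pow_self))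

lemma clog_64mul (x y : ℕ) (h : x ≤ 64 * y) (hy : 1 ≤ y) : Nat.clog 2 x ≤ 6 + Nat.clog 2 y := by
  have : x ≤ 2 ^ (6 + Nat.clog 2 y) := by
    have h2 : y ≤ 2 ^ Nat.clog 2 y := Nat.le_pow_clog one_lt_two y
    calc x ≤ 64 * y := h
      _ ≤ 64 * 2 ^ Nat.clog 2 y := by omega
      _ = 2 ^ (6 + Nat.clog 2 y) := by rw [pow_add]; norm_num
  exact (Nat.clog_le_iff_le_pow one_lt_two).2 this

lemma fC_le : ∀ k, fC k ≤ 64 * (k + 1)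
  | 0 => by simp [fC]
  | 1 => by simp [fC]
  | 2 => by simp [fC]
  | k + 3 => by
    have ih : fC (k + 2) ≤ 64 * (k + 3) := fC_le (k + 2)
    show max (fC (k+2) + 4) (4 * (2 * Nat.clog 2 (fC (k+2) + 1) + 13)) ≤ 64 * (k + 4)
    apply max_le
    · omega
    · have h1 : Nat.clog 2 (fC (k+2) + 1) ≤ 6 + Nat.clog 2 (k + 4) := by
        apply clog_64mul _ _ (by omega) (by omega)
      have h2 : Nat.clog 2 (k + 4) ≤ k + 4 := clog_le_self _
      omega

lemma two_mul_le_pow {d : ℕ} (hd : 1 ≤ d) : 2 * d ≤ 2 ^ d := by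
  have := @Nat.lt_two_pow_self (d - 1)
  have h2 : 2 ^ (d - 1 + 1) = 2 ^ (d-1) * 2 := pow_succ 2 (d-1)
  have h3 : d - 1 + 1 = d := by omega
  rw [h3] at h2
  omega

lemma bad_numeric (f j : ℕ) (hj : 1 ≤ j) (h : 2 ^ (j - 1) < f * j) :
    j ≤ 2 * Nat.clog 2 (f + 1) + 12 := by
  by_contra hcon
  push_neg at hcon
  set c := Nat.clog 2 (f + 1) with hc
  have hfc : f + 1 ≤ 2 ^ c := Nat.le_pow_clog one_lt_two _
  have hj1 : j - 1 = c + (j - 1 - c) := by omega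
  set d := j - 1 - c with hdd
  have hd2 : 2 * d ≥ j + 11 := by omega
  have hsplit : 2 ^ (j - 1) = 2 ^ c * 2 ^ d := by rw [hj1, pow_add]
  have hlt : 2 ^ c * 2 ^ d < 2 ^ c * j := by
    calc 2 ^ c * 2 ^ d = 2 ^ (j-1) := hsplit.symm
      _ < f * j := h
      _ ≤ 2 ^ c * j := by
          have : f ≤ 2 ^ c := by omega
          exact Nat.mul_le_mul_right j this
  have hdj : 2 ^ d < j := by
    have hpos : 0 < 2 ^ c := Nat.pow_pos (by norm_num)
    exact Nat.lt_of_mul_lt_mul_left hlt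
  have h2d : 2 * d ≤ 2 ^ d := two_mul_le_pow (by omega)
  omega

/-- chunks of size `s+1` -/
def chunk1 (s : ℕ) : List α → List (List α)
  | [] => []
  | x :: xs => (x :: xs).take (s+1) :: chunk1 s (xs.drop s)
termination_by l => l.length
decreasing_by simp <;> omega

lemma chunk1_nil (s : ℕ) : chunk1 s ([] : List α) = [] := by rw [chunk1]

lemma chunk1_cons (s : ℕ) (x : α) (xs : List α) :
    chunk1 s (x :: xs) = (x :: xs).take (s+1) :: chunk1 s (xs.drop s) := by rw [chunk1]

lemma chunk1_flatten (s : ℕ) : ∀ (n : ℕ) (l : List α), l.length ≤ n → (chunk1 s l).flatten = l := by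
  intro n
  induction n with
  | zero =>
    intro l hl
    cases l with
    | nil => rw [chunk1_nil]; rfl
    | cons x xs => simp at hl
  | succ n ih =>
    intro l hl
    cases l with
    | nil => rw [chunk1_nil]; rfl
    | cons x xs =>
      rw [chunk1_cons, List.flatten_cons]
      have hdrop : (x :: xs).drop (s + 1) = xs.drop s := by simp
      have h2 := ih (xs.drop s) (by simp at hl ⊢; omega)
      rw [h2, ← hdrop]
      exact List.take_append_drop _ _

lemma chunk1_parts (s : ℕ) : ∀ (n : ℕ) (l : List α), l.length ≤ n →
    ∀ p ∈ chunk1 s l, p.length ≤ s + 1 := by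
  intro n
  induction n with
  | zero =>
    intro l hl p hp
    cases l with
    | nil => rw [chunk1_nil] at hp; cases hp
    | cons x xs => simp at hl
  | succ n ih =>
    intro l hl p hp
    cases l with
    | nil => rw [chunk1_nil] at hp; cases hp
    | cons x xs =>
      rw [chunk1_cons] at hp
      rcases List.mem_cons.1 hp with hp | hp
      · subst hp; simp
      · exact ih (xs.drop s) (by simp at hl ⊢; omega) p hp

lemma chunk1_count (s : ℕ) : ∀ (n : ℕ) (l : List α), l.length ≤ n → l ≠ [] →
    ((chunk1 s l).length - 1) * (s + 1) + 1 ≤ l.length := by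
  intro n
  induction n with
  | zero =>
    intro l hl hne
    cases l with
    | nil => exact absurd rfl hne
    | cons x xs => simp at hl
  | succ n ih =>
    intro l hl hne
    cases l with
    | nil => exact absurd rfl hne
    | cons x xs =>
      rw [chunk1_cons]
      rcases Nat.eq_zero_or_pos (xs.drop s).length with hz | hpos
      · have hz2 : xs.drop s = [] := List.length_eq_zero_iff.1 hz
        rw [hz2, chunk1_nil]
        simp
      · have hne2 : xs.drop s ≠ [] := by
          intro hh; rw [hh] at hpos; simp at hpos
        have hIH := ih (xs.drop s) (by simp at hl ⊢; omega) hne2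
        have hlen : (xs.drop s).length = xs.length - s := by simp
        rw [hlen] at hIH
        have hxs : s ≤ xs.length := by omega
        have hc1 : 1 ≤ (chunk1 s (xs.drop s)).length := by
          cases hcc : chunk1 s (xs.drop s) with
          | nil =>
            exfalso
            have hf := chunk1_flatten s (xs.drop s).length (xs.drop s) le_rfl
            rw [hcc] at hf
            exact hne2 hf.symm
          | cons a b => simp
        obtain ⟨c, hc⟩ : ∃ c, (chunk1 s (xs.drop s)).length = c + 1 :=
          ⟨(chunk1 s (xs.drop s)).length - 1, by omega⟩
        simp only [List.length_cons, hc]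
        have e1 : (c + 1 + 1 - 1) * (s + 1) = c * (s+1) + (s + 1) := by
          simp [add_mul]
        have e2 : (c + 1 - 1) * (s + 1) = c * (s+1) := by simp
        rw [hc, e2] at hIH
        omega

lemma chunk1_len_le (s : ℕ) : ∀ (n : ℕ) (l : List α), l.length ≤ n →
    (chunk1 s l).length ≤ l.length := by
  intro n
  induction n with
  | zero =>
    intro l hl
    cases l with
    | nil => rw [chunk1_nil]; exact le_rfl
    | cons x xs => simp at hl
  | succ n ih =>
    intro l hl
    cases l with
    | nil => rw [chunk1_nil]; exact le_rfl
    | cons x xs =>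
      rw [chunk1_cons]
      have h1 := ih (xs.drop s) (by simp at hl ⊢; omega)
      have h2 : (xs.drop s).length ≤ xs.length := by simp
      simp only [List.length_cons]
      omega


open List (Sublist)
open scoped List

lemma altList3 (a b : ℕ) : altList a b 3 = [a, b, a] := rfl
lemma altList5 (a b : ℕ) : altList a b 5 = [a, b, a, b, a] := rfl

lemma two_distinct_of_filter (C : List ℕ) (p : ℕ → Bool) (hnd : C.Nodup)
    (h : 2 ≤ (C.filter p).length) :
    ∃ a b : ℕ, a ≠ b ∧ p a ∧ p b ∧ [a, b] <+ C := by
  have hsub : C.filter p <+ C := List.filter_sublist (l := C)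
  have hndf : (C.filter p).Nodup := hnd.filter p
  rcases hF : C.filter p with _ | ⟨a, t⟩
  · rw [hF] at h; simp at h
  · rcases ht : t with _ | ⟨b, t2⟩
    · rw [hF, ht] at h; simp at h
    · refine ⟨a, b, ?_, ?_, ?_, ?_⟩
      · rw [hF, ht] at hndf
        intro hab
        subst hab
        simp at hndf
      · have : a ∈ C.filter p := by rw [hF]; simp
        exact (List.mem_filter.1 this).2
      · have : b ∈ C.filter p := by rw [hF, ht]; simp
        exact (List.mem_filter.1 this).2
      · have h1 : [a, b] <+ C.filter p := by
          rw [hF, ht]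
          apply List.Sublist.cons₂
          apply List.Sublist.cons₂
          exact List.nil_sublist _
        exact h1.trans hsub

lemma filter_le_one (C : List ℕ) (p : ℕ → Bool) (hnd : C.Nodup)
    (h : ∀ a b : ℕ, a ≠ b → p a → p b → ¬ [a, b] <+ C) :
    (C.filter p).length ≤ 1 := by
  by_contra hc
  push_neg at hc
  obtain ⟨a, b, hab, hpa, hpb, hsub⟩ := two_distinct_of_filter C p hnd (by omega)
  exact h a b hab hpa hpb hsub

lemma filter_length_eq_card (C : List ℕ) (p : ℕ → Bool) (hnd : C.Nodup) :
    (C.filter p).length = (C.toFinset.filter (fun a => p a = true)).card := by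
  rw [← List.toFinset_filter]
  exact (List.toFinset_card_of_nodup (hnd.filter p)).symm

lemma filter_not_mem_card (C : List ℕ) (X : List ℕ) (hnd : C.Nodup) :
    (C.filter (fun a => decide (¬ a ∈ X))).length = (C.toFinset \ X.toFinset).card := by
  rw [filter_length_eq_card C _ hnd]
  congr 1
  ext a
  simp [Finset.mem_sdiff, Finset.mem_filter]

/-- accounting: new elements discovered blockwise -/
lemma sdiff_accounting (CF RF P : Finset ℕ) :
    (CF \ P).card + (RF \ (P ∪ CF)).card ≤ ((CF ∪ RF) \ P).card := by
  have hdisj : Disjoint (CF \ P) (RF \ (P ∪ CF)) := by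
    rw [Finset.disjoint_left]
    intro a ha hb
    simp only [Finset.mem_sdiff, Finset.mem_union, not_or] at ha hb
    exact hb.2.2 ha.1
  rw [← Finset.card_union_of_disjoint hdisj]
  apply Finset.card_le_card
  intro a ha
  simp only [Finset.mem_union, Finset.mem_sdiff, Finset.mem_union, not_or] at ha ⊢
  rcases ha with ⟨h1, h2⟩ | ⟨h1, h2⟩
  · exact ⟨Or.inl h1, h2⟩
  · exact ⟨Or.inr h1, h2.1⟩

lemma sdiff_last_accounting (CF RF : Finset ℕ) :
    (CF \ RF).card + RF.card ≤ (CF ∪ RF).card := by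
  have hdisj : Disjoint (CF \ RF) RF := Finset.sdiff_disjoint
  rw [← Finset.card_union_of_disjoint hdisj]
  apply Finset.card_le_card
  rw [Finset.sdiff_union_self_eq_union]

/-- L1: blocks of distinct symbols, no `aba` pattern (relative to a prefix `cum`). -/
lemma L1Aux : ∀ (Cs : List (List ℕ)) (cum : List ℕ),
    (∀ C ∈ Cs, C.Nodup) →
    (∀ a b : ℕ, a ≠ b → ¬ (altList a b 3) <+ cum ++ Cs.flatten) →
    Cs.flatten.length ≤ Cs.length + (Cs.flatten.toFinset \ cum.toFinset).card := by
  intro Cs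
  induction Cs with
  | nil => intro cum _ _; simp
  | cons C Cs ih =>
    intro cum hnd hNA
    have hndC : C.Nodup := hnd C (by simp)
    rw [List.flatten_cons]
    have hsplit := List.length_eq_length_filter_add (l := C) (fun a => decide (a ∈ cum))
    have h1 : (C.filter (fun a => decide (a ∈ cum))).length ≤ 1 := by
      apply filter_le_one C _ hndC
      intro a b hab hpa hpb hsub
      simp only [decide_eq_true_eq] at hpa hpb
      apply hNA b a (Ne.symm hab)
      rw [altList3]
      have : [b] ++ ([a, b] ++ []) <+ cum ++ (C ++ Cs.flatten) := by
        apply List.Sublist.append (List.singleton_sublist.2 hpb)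
        exact List.Sublist.append hsub (List.nil_sublist _)
      simpa using this
    have h2 : (C.filter (fun a => !decide (a ∈ cum))).length
        = (C.toFinset \ cum.toFinset).card := by
      rw [← filter_not_mem_card C cum hndC]
      congr 1
      ext a
      simp
    have hIH := ih (cum ++ C) (fun D hD => hnd D (by simp [hD]))
      (by
        intro a b hab hsub
        apply hNA a b hab
        rwa [List.append_assoc] at hsub)
    have hacc := sdiff_accounting C.toFinset Cs.flatten.toFinset cum.toFinset
    rw [List.toFinset_append] at hIH
    have htf : (C ++ Cs.flatten).toFinset = C.toFinset ∪ Cs.flatten.toFinset :=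
      List.toFinset_append
    rw [List.length_append, htf]
    simp only [List.length_cons]
    omega


lemma filter_and_not_card (C : List ℕ) (hnd : C.Nodup) (X Y : List ℕ) :
    (C.filter (fun a => !(decide (a ∈ X) && decide (a ∈ Y)))).length ≤
      (C.toFinset \ X.toFinset).card + (C.toFinset \ Y.toFinset).card := by
  rw [filter_length_eq_card _ _ hnd]
  calc (C.toFinset.filter (fun a => (!(decide (a ∈ X) && decide (a ∈ Y))) = true)).card
      ≤ ((C.toFinset \ X.toFinset) ∪ (C.toFinset \ Y.toFinset)).card := by
        apply Finset.card_le_card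
        intro a ha
        simp only [Finset.mem_filter, Bool.and_eq_true, decide_eq_true_eq, Bool.not_eq_true',
          Bool.and_eq_false_iff, decide_eq_false_iff_not] at ha
        simp only [Finset.mem_union, Finset.mem_sdiff, List.mem_toFinset]
        rcases ha.2 with h | h
        · left; exact ⟨by simpa using ha.1, by simpa using h⟩
        · right; exact ⟨by simpa using ha.1, by simpa using h⟩
    _ ≤ _ := Finset.card_union_le _ _

/-- L2 (start side): every symbol occurs later in `post`; no alternation of length 5. -/
lemma LstartAux : ∀ (Cs : List (List ℕ)) (cum post : List ℕ),
    (∀ C ∈ Cs, C.Nodup) →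
    (∀ a ∈ Cs.flatten, a ∈ post) →
    (∀ a b : ℕ, a ≠ b → ¬ altList a b 5 <+ cum ++ (Cs.flatten ++ post)) →
    Cs.flatten.length ≤ Cs.length + (Cs.flatten.toFinset \ cum.toFinset).card
      + Cs.flatten.toFinset.card := by
  intro Cs
  induction Cs with
  | nil => intro cum post _ _ _; simp
  | cons C Cs ih =>
    intro cum post hnd hpost hNA
    have hndC : C.Nodup := hnd C (by simp)
    rw [List.flatten_cons]
    set R := Cs.flatten with hR
    have hsplit := List.length_eq_length_filter_add (l := C)
      (fun a => decide (a ∈ cum) && decide (a ∈ R))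
    have h1 : (C.filter (fun a => decide (a ∈ cum) && decide (a ∈ R))).length ≤ 1 := by
      apply filter_le_one C _ hndC
      intro a b hab hpa hpb hsub
      simp only [Bool.and_eq_true, decide_eq_true_eq] at hpa hpb
      apply hNA b a (Ne.symm hab)
      rw [altList5]
      have hbpost : b ∈ post := hpost b (by simp [List.mem_append]; left; exact hsub.subset (by simp))
      have : [b] ++ (([a, b] ++ [a]) ++ [b]) <+ cum ++ ((C ++ R) ++ post) := by
        apply List.Sublist.append (List.singleton_sublist.2 hpb.1)
        apply List.Sublist.append
        · exact List.Sublist.append hsub (List.singleton_sublist.2 hpa.2)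
        · exact List.singleton_sublist.2 hbpost
      simpa using this
    have h2 := filter_and_not_card C hndC cum R
    have hIH := ih (cum ++ C) post (fun D hD => hnd D (by simp [hD]))
      (fun a ha => hpost a (by rw [List.flatten_cons]; exact List.mem_append_right C ha))
      (by
        intro a b hab hsub
        apply hNA a b hab
        rw [List.append_assoc, ← List.append_assoc C R post] at hsub
        exact hsub)
    rw [List.toFinset_append] at hIH
    have hacc := sdiff_accounting C.toFinset R.toFinset cum.toFinset
    have hacc2 := sdiff_last_accounting C.toFinset R.toFinset
    have htf : (C ++ R).toFinset = C.toFinset ∪ R.toFinset := List.toFinset_append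
    rw [List.length_append, htf]
    simp only [List.length_cons]
    omega

/-- L2 (end side): every symbol occurs earlier in `pre0`; no alternation of length 5. -/
lemma LendAux : ∀ (Cs : List (List ℕ)) (pre0 cum : List ℕ),
    (∀ C ∈ Cs, C.Nodup) →
    (∀ a ∈ Cs.flatten, a ∈ pre0) →
    (∀ a b : ℕ, a ≠ b → ¬ altList a b 5 <+ pre0 ++ (cum ++ Cs.flatten)) →
    Cs.flatten.length ≤ Cs.length + (Cs.flatten.toFinset \ cum.toFinset).card
      + Cs.flatten.toFinset.card := by
  intro Cs
  induction Cs with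
  | nil => intro pre0 cum _ _ _; simp
  | cons C Cs ih =>
    intro pre0 cum hnd hpre hNA
    have hndC : C.Nodup := hnd C (by simp)
    rw [List.flatten_cons]
    set R := Cs.flatten with hR
    have hsplit := List.length_eq_length_filter_add (l := C)
      (fun a => decide (a ∈ cum) && decide (a ∈ R))
    have h1 : (C.filter (fun a => decide (a ∈ cum) && decide (a ∈ R))).length ≤ 1 := by
      apply filter_le_one C _ hndC
      intro a b hab hpa hpb hsub
      simp only [Bool.and_eq_true, decide_eq_true_eq] at hpa hpb
      apply hNA a b hab
      rw [altList5]
      have hapre : a ∈ pre0 := hpre a (by simp [List.mem_append]; left; exact hsub.subset (by simp))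
      have : [a] ++ ([b] ++ ([a, b] ++ [a])) <+ pre0 ++ (cum ++ (C ++ R)) := by
        apply List.Sublist.append (List.singleton_sublist.2 hapre)
        apply List.Sublist.append (List.singleton_sublist.2 hpb.1)
        exact List.Sublist.append hsub (List.singleton_sublist.2 hpa.2)
      simpa using this
    have h2 := filter_and_not_card C hndC cum R
    have hIH := ih pre0 (cum ++ C) (fun D hD => hnd D (by simp [hD]))
      (fun a ha => hpre a (by rw [List.flatten_cons]; exact List.mem_append_right C ha))
      (by
        intro a b hab hsub
        apply hNA a b hab
        rw [List.flatten_cons, ← List.append_assoc cum C R]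
        exact hsub)
    rw [List.toFinset_append] at hIH
    have hacc := sdiff_accounting C.toFinset R.toFinset cum.toFinset
    have hacc2 := sdiff_last_accounting C.toFinset R.toFinset
    have htf : (C ++ R).toFinset = C.toFinset ∪ R.toFinset := List.toFinset_append
    rw [List.length_append, htf]
    simp only [List.length_cons]
    omega



lemma length_split4 (W : List ℕ) (p q : ℕ → Bool) :
    W.length = (W.filter (fun a => p a && q a)).length
      + (W.filter (fun a => p a && !q a)).length
      + (W.filter (fun a => !p a && q a)).length
      + (W.filter (fun a => !p a && !q a)).length := by
  induction W with
  | nil => simp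
  | cons x t ih =>
    simp only [List.filter_cons]
    cases hp : p x <;> cases hq : q x <;> simp [List.length_cons] <;> omega

lemma flatten_map_filter (part : List (List ℕ)) (q : ℕ → Bool) :
    (part.map (List.filter q)).flatten = part.flatten.filter q := by
  induction part with
  | nil => simp
  | cons C t ih =>
    rw [List.map_cons, List.flatten_cons, List.flatten_cons, List.filter_append, ih]

/-- The core recurrence decomposition for one level of partitioning. -/
lemma core : ∀ (P : List (List (List ℕ))) (pre : List ℕ) (s G1 G2 : ℕ),
    (∀ part ∈ P, ∀ C ∈ part, C.Nodup) →
    (∀ part ∈ P, part.length ≤ s) →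
    (∀ a b : ℕ, a ≠ b → ¬ altList a b 5 <+ pre ++ P.flatten.flatten) →
    (∀ Cs : List (List ℕ), (∀ C ∈ Cs, C.Nodup) → Cs.length ≤ s →
      (∀ a b : ℕ, a ≠ b → ¬ altList a b 5 <+ Cs.flatten) →
      Cs.flatten.length ≤ G1 * Cs.length + G2 * Cs.flatten.toFinset.card) →
    ∃ (Ts : List (List ℕ)) (LocS GlobS StartU EndU : Finset ℕ),
      Ts.length = P.length ∧ (∀ C ∈ Ts, C.Nodup) ∧ Ts.flatten <+ P.flatten.flatten ∧
      Ts.flatten.toFinset ⊆ GlobS ∧ StartU ⊆ GlobS ∧ EndU ⊆ GlobS ∧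
      LocS ⊆ (P.flatten.flatten).toFinset ∧ GlobS ⊆ (P.flatten.flatten).toFinset ∧
      Disjoint LocS GlobS ∧ Disjoint LocS pre.toFinset ∧ Disjoint StartU pre.toFinset ∧
      P.flatten.flatten.length ≤ (G1 + 3) * P.flatten.length + G2 * LocS.card
        + 2 * StartU.card + 2 * EndU.card + Ts.flatten.length := by
  intro P
  induction P with
  | nil =>
    intro pre s G1 G2 _ _ _ _
    exact ⟨[], ∅, ∅, ∅, ∅, by simp⟩
  | cons part P' ih =>
    intro pre s G1 G2 hnd hsz hNA Hloc
    set W := part.flatten with hW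
    set A := P'.flatten.flatten with hA
    have hflat : (part :: P').flatten.flatten = W ++ A := by
      rw [List.flatten_cons, List.flatten_append]
    rw [hflat] at hNA
    -- the four classes
    set Wmid := W.filter (fun a => decide (a ∈ pre) && decide (a ∈ A)) with hWmid
    set Wen := W.filter (fun a => decide (a ∈ pre) && !decide (a ∈ A)) with hWen
    set Wst := W.filter (fun a => !decide (a ∈ pre) && decide (a ∈ A)) with hWst
    set Wloc := W.filter (fun a => !decide (a ∈ pre) && !decide (a ∈ A)) with hWloc
    have hsplit := length_split4 W (fun a => decide (a ∈ pre)) (fun a => decide (a ∈ A))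
    rw [← hWmid, ← hWen, ← hWst, ← hWloc] at hsplit
    have hndpart : ∀ C ∈ part, C.Nodup := hnd part (by simp)
    have hW_le : W <+ W ++ A := List.sublist_append_left _ _
    have hWA_ctx : ∀ (u : List ℕ), u <+ W ++ A → u <+ pre ++ (W ++ A) := by
      intro u hu
      have : [] ++ u <+ pre ++ (W ++ A) := List.Sublist.append (List.nil_sublist _) hu
      simpa using this
    -- (1) local part
    have hloc_len : Wloc.length ≤ G1 * part.length + G2 * Wloc.toFinset.card := by
      have h := Hloc (part.map (List.filter (fun a => !decide (a ∈ pre) && !decide (a ∈ A))))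
        (fun D hD => by
          obtain ⟨C, hC, rfl⟩ := List.mem_map.1 hD
          exact (hndpart C hC).filter _)
        (by rw [List.length_map]; exact hsz part (by simp))
        (by
          intro a b hab hsub
          rw [flatten_map_filter] at hsub
          exact hNA a b hab (hWA_ctx _ ((hsub.trans (List.filter_sublist (l := _))).trans hW_le)))
      rwa [flatten_map_filter, List.length_map] at h
    -- (2) middle part
    have hmid_len : Wmid.length ≤ part.length + Wmid.toFinset.card := by
      have h := L1Aux (part.map (List.filter (fun a => decide (a ∈ pre) && decide (a ∈ A)))) []
        (fun D hD => by
          obtain ⟨C, hC, rfl⟩ := List.mem_map.1 hD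
          exact (hndpart C hC).filter _)
        (by
          intro a b hab hsub
          rw [flatten_map_filter] at hsub
          simp only [List.nil_append] at hsub
          rw [altList3] at hsub
          have ha : a ∈ Wmid := hsub.subset (by simp)
          have hb : b ∈ Wmid := hsub.subset (by simp)
          have hbp := List.mem_filter.1 hb
          simp only [Bool.and_eq_true, decide_eq_true_eq] at hbp
          apply hNA b a (Ne.symm hab)
          rw [altList5]
          have hbig : [b] ++ ([a, b, a] ++ [b]) <+ pre ++ (W ++ A) := by
            apply List.Sublist.append (List.singleton_sublist.2 hbp.2.1)
            apply List.Sublist.append (hsub.trans (List.filter_sublist (l := _)))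
            exact List.singleton_sublist.2 hbp.2.2
          simpa using hbig)
      rwa [flatten_map_filter, List.length_map, List.toFinset_nil, Finset.sdiff_empty] at h
    -- (3) start part
    have hst_len : Wst.length ≤ part.length + 2 * Wst.toFinset.card := by
      have h := LstartAux (part.map (List.filter (fun a => !decide (a ∈ pre) && decide (a ∈ A)))) [] A
        (fun D hD => by
          obtain ⟨C, hC, rfl⟩ := List.mem_map.1 hD
          exact (hndpart C hC).filter _)
        (by
          intro a ha
          rw [flatten_map_filter] at ha
          have := List.mem_filter.1 ha
          simp only [Bool.and_eq_true, decide_eq_true_eq] at this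
          exact this.2.2)
        (by
          intro a b hab hsub
          rw [flatten_map_filter] at hsub
          simp only [List.nil_append] at hsub
          apply hNA a b hab
          exact hWA_ctx _ (hsub.trans (List.Sublist.append (List.filter_sublist (l := _)) (List.Sublist.refl A))))
      rw [flatten_map_filter, List.length_map, List.toFinset_nil, Finset.sdiff_empty, ← hWst] at h
      omega
    -- (4) end part
    have hen_len : Wen.length ≤ part.length + 2 * Wen.toFinset.card := by
      have h := LendAux (part.map (List.filter (fun a => decide (a ∈ pre) && !decide (a ∈ A)))) pre []
        (fun D hD => by
          obtain ⟨C, hC, rfl⟩ := List.mem_map.1 hD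
          exact (hndpart C hC).filter _)
        (by
          intro a ha
          rw [flatten_map_filter] at ha
          have := List.mem_filter.1 ha
          simp only [Bool.and_eq_true, decide_eq_true_eq, Bool.not_eq_true', decide_eq_false_iff_not] at this
          exact this.2.1)
        (by
          intro a b hab hsub
          rw [flatten_map_filter] at hsub
          simp only [List.nil_append] at hsub
          apply hNA a b hab
          exact hsub.trans (List.Sublist.append (List.Sublist.refl pre)
            ((List.filter_sublist (l := W)).trans hW_le)))
      rw [flatten_map_filter, List.length_map, List.toFinset_nil, Finset.sdiff_empty, ← hWen] at h
      omega
    -- (5) recurse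
    obtain ⟨Ts', LocS', GlobS', StartU', EndU', c1, c2, c3, c4, c5, c6, c7, c8, c9, c10, c11, cB⟩ :=
      ih (pre ++ W) s G1 G2 (fun q hq => hnd q (by simp [hq])) (fun q hq => hsz q (by simp [hq]))
        (by
          intro a b hab hsub
          apply hNA a b hab
          rwa [List.append_assoc] at hsub) Hloc
    -- assemble
    refine ⟨Wmid.dedup :: Ts', Wloc.toFinset ∪ LocS',
      ((Wmid.toFinset ∪ Wst.toFinset) ∪ Wen.toFinset) ∪ GlobS',
      Wst.toFinset ∪ StartU', Wen.toFinset ∪ EndU', ?_, ?_, ?_, ?_, ?_, ?_, ?_, ?_, ?_, ?_, ?_, ?_⟩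
    · simp [c1]
    · intro C hC
      rcases List.mem_cons.1 hC with rfl | hC
      · exact Wmid.nodup_dedup
      · exact c2 C hC
    · rw [hflat, List.flatten_cons]
      exact List.Sublist.append ((Wmid.dedup_sublist).trans (List.filter_sublist (l := _))) c3
    · rw [List.flatten_cons, List.toFinset_append]
      have hdtf : Wmid.dedup.toFinset = Wmid.toFinset := by
        ext a; simp [List.mem_dedup]
      rw [hdtf]
      apply Finset.union_subset
      · intro a ha; simp only [Finset.mem_union]; left; left; left; exact ha
      · intro a ha; simp only [Finset.mem_union]; right; exact c4 ha
    · apply Finset.union_subset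
      · intro a ha; simp only [Finset.mem_union]; left; left; right; exact ha
      · intro a ha; simp only [Finset.mem_union]; right; exact c5 ha
    · apply Finset.union_subset
      · intro a ha; simp only [Finset.mem_union]; left; right; exact ha
      · intro a ha; simp only [Finset.mem_union]; right; exact c6 ha
    · rw [hflat, List.toFinset_append]
      apply Finset.union_subset
      · intro a ha
        simp only [List.mem_toFinset] at ha
        simp only [Finset.mem_union, List.mem_toFinset]
        left
        exact List.mem_of_mem_filter ha
      · intro a ha
        simp only [Finset.mem_union, List.mem_toFinset]
        right
        exact List.mem_toFinset.1 (c7 ha)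
    · rw [hflat, List.toFinset_append]
      have hsubW : ∀ (q : ℕ → Bool), (W.filter q).toFinset ⊆ W.toFinset := by
        intro q a ha
        simp only [List.mem_toFinset] at ha ⊢
        exact List.mem_of_mem_filter ha
      apply Finset.union_subset
      apply Finset.union_subset
      apply Finset.union_subset
      · exact (hsubW _).trans (Finset.subset_union_left)
      · exact (hsubW _).trans (Finset.subset_union_left)
      · exact (hsubW _).trans (Finset.subset_union_left)
      · exact c8.trans (Finset.subset_union_right)
    · -- Disjoint LocS GlobS
      rw [Finset.disjoint_left]
      intro a ha hb
      have hmemW : ∀ (q : ℕ → Bool) (x : ℕ), x ∈ (W.filter q).toFinset → x ∈ W ∧ q x = true := by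
        intro q x hx
        exact List.mem_filter.1 (List.mem_toFinset.1 hx)
      rcases Finset.mem_union.1 ha with ha | ha
      · obtain ⟨haW, hq⟩ := hmemW _ a ha
        simp only [Bool.and_eq_true, Bool.not_eq_true', decide_eq_false_iff_not] at hq
        rcases Finset.mem_union.1 hb with hb | hb
        · rcases Finset.mem_union.1 hb with hb | hb
          · rcases Finset.mem_union.1 hb with hb | hb
            · obtain ⟨_, hq2⟩ := hmemW _ a hb
              simp only [Bool.and_eq_true, decide_eq_true_eq] at hq2
              exact hq.1 hq2.1
            · obtain ⟨_, hq2⟩ := hmemW _ a hb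
              simp only [Bool.and_eq_true, decide_eq_true_eq, Bool.not_eq_true',
                decide_eq_false_iff_not] at hq2
              exact hq.2 hq2.2
          · obtain ⟨_, hq2⟩ := hmemW _ a hb
            simp only [Bool.and_eq_true, decide_eq_true_eq] at hq2
            exact hq.1 hq2.1
        · have : a ∈ A := List.mem_toFinset.1 (c8 hb)
          exact hq.2 this
      · have hnotpreW : a ∉ (pre ++ W).toFinset := Finset.disjoint_left.1 c10 ha
        rcases Finset.mem_union.1 hb with hb | hb
        · have haW : a ∈ W := by
            rcases Finset.mem_union.1 hb with hb | hb
            · rcases Finset.mem_union.1 hb with hb | hb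
              · exact List.mem_of_mem_filter (List.mem_toFinset.1 hb)
              · exact List.mem_of_mem_filter (List.mem_toFinset.1 hb)
            · exact List.mem_of_mem_filter (List.mem_toFinset.1 hb)
          exact hnotpreW (by rw [List.toFinset_append]; exact Finset.mem_union_right _ (List.mem_toFinset.2 haW))
        · exact Finset.disjoint_left.1 c9 ha hb
    · -- Disjoint LocS pre
      rw [Finset.disjoint_left]
      intro a ha hb
      rcases Finset.mem_union.1 ha with ha | ha
      · have hq := (List.mem_filter.1 (List.mem_toFinset.1 ha)).2
        simp only [Bool.and_eq_true, Bool.not_eq_true', decide_eq_false_iff_not] at hq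
        exact hq.1 (List.mem_toFinset.1 hb)
      · exact Finset.disjoint_left.1 c10 ha
          (by rw [List.toFinset_append]; exact Finset.mem_union_left _ hb)
    · -- Disjoint StartU pre
      rw [Finset.disjoint_left]
      intro a ha hb
      rcases Finset.mem_union.1 ha with ha | ha
      · have hq := (List.mem_filter.1 (List.mem_toFinset.1 ha)).2
        simp only [Bool.and_eq_true, Bool.not_eq_true', decide_eq_false_iff_not,
          decide_eq_true_eq] at hq
        exact hq.1 (List.mem_toFinset.1 hb)
      · exact Finset.disjoint_left.1 c11 ha
          (by rw [List.toFinset_append]; exact Finset.mem_union_left _ hb)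
    · -- the length bound
      rw [hflat, List.length_append]
      have hbl : (part :: P').flatten.length = part.length + P'.flatten.length := by
        rw [List.flatten_cons, List.length_append]
      have hTs : (Wmid.dedup :: Ts').flatten.length = Wmid.dedup.length + Ts'.flatten.length := by
        rw [List.flatten_cons, List.length_append]
      have hdedup : Wmid.dedup.length = Wmid.toFinset.card := (List.card_toFinset Wmid).symm
      have dLoc : Disjoint Wloc.toFinset LocS' := by
        rw [Finset.disjoint_left]
        intro a ha hb
        have haW : a ∈ W := List.mem_of_mem_filter (List.mem_toFinset.1 ha)
        exact Finset.disjoint_left.1 c10 hb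
          (by rw [List.toFinset_append]; exact Finset.mem_union_right _ (List.mem_toFinset.2 haW))
      have dSt : Disjoint Wst.toFinset StartU' := by
        rw [Finset.disjoint_left]
        intro a ha hb
        have haW : a ∈ W := List.mem_of_mem_filter (List.mem_toFinset.1 ha)
        exact Finset.disjoint_left.1 c11 hb
          (by rw [List.toFinset_append]; exact Finset.mem_union_right _ (List.mem_toFinset.2 haW))
      have dEn : Disjoint Wen.toFinset EndU' := by
        rw [Finset.disjoint_left]
        intro a ha hb
        have hq := (List.mem_filter.1 (List.mem_toFinset.1 ha)).2
        simp only [Bool.and_eq_true, Bool.not_eq_true', decide_eq_false_iff_not,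
          decide_eq_true_eq] at hq
        exact hq.2 (List.mem_toFinset.1 (c8 (c6 hb)))
      have cardLoc := Finset.card_union_of_disjoint dLoc
      have cardSt := Finset.card_union_of_disjoint dSt
      have cardEn := Finset.card_union_of_disjoint dEn
      rw [hbl, hTs, hdedup, cardLoc, cardSt, cardEn]
      have e1 : (G1 + 3) * (part.length + P'.flatten.length)
          = G1 * part.length + 3 * part.length + (G1 + 3) * P'.flatten.length := by ring
      have e2 : G2 * (Wloc.toFinset.card + LocS'.card)
          = G2 * Wloc.toFinset.card + G2 * LocS'.card := by ring
      rw [e1, e2]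
      omega

lemma noalt_sublist {u v : List ℕ} (huv : u <+ v)
    (h : ∀ a b : ℕ, a ≠ b → ¬ altList a b 5 <+ v) :
    ∀ a b : ℕ, a ≠ b → ¬ altList a b 5 <+ u :=
  fun a b hab hsub => h a b hab (hsub.trans huv)

lemma flatten_le_blocks_mul (Ts : List (List ℕ)) (g : ℕ)
    (hnd : ∀ C ∈ Ts, C.Nodup) (hg : Ts.flatten.toFinset.card ≤ g) :
    Ts.flatten.length ≤ Ts.length * g := by
  induction Ts with
  | nil => simp
  | cons C t ih =>
    rw [List.flatten_cons, List.length_append, List.length_cons]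
    have hCf : C.toFinset ⊆ (C ++ t.flatten).toFinset := by
      rw [List.toFinset_append]; exact Finset.subset_union_left
    have htf : t.flatten.toFinset ⊆ (C ++ t.flatten).toFinset := by
      rw [List.toFinset_append]; exact Finset.subset_union_right
    rw [List.flatten_cons] at hg
    have hC : C.length ≤ g := by
      rw [← List.toFinset_card_of_nodup (hnd C (by simp))]
      exact le_trans (Finset.card_le_card hCf) hg
    have ht : t.flatten.length ≤ t.length * g :=
      ih (fun D hD => hnd D (by simp [hD])) (le_trans (Finset.card_le_card htf) hg)
    have : (t.length + 1) * g = t.length * g + g := by ring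
    omega

lemma single_block (Bs : List (List ℕ)) (n : ℕ) (h1 : Bs.length ≤ 1)
    (hnd : ∀ C ∈ Bs, C.Nodup) (hcard : Bs.flatten.toFinset.card ≤ n) :
    Bs.flatten.length ≤ n := by
  have := flatten_le_blocks_mul Bs n hnd (le_trans hcard le_rfl)
  calc Bs.flatten.length ≤ Bs.length * n := this
    _ ≤ 1 * n := Nat.mul_le_mul_right n h1
    _ = n := one_mul n

lemma split_step (s' G1 G2 n : ℕ) (Bs : List (List ℕ))
    (hnd : ∀ C ∈ Bs, C.Nodup) (hcard : Bs.flatten.toFinset.card ≤ n)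
    (hNA : ∀ a b : ℕ, a ≠ b → ¬ altList a b 5 <+ Bs.flatten)
    (Hloc : ∀ Cs : List (List ℕ), (∀ C ∈ Cs, C.Nodup) → Cs.length ≤ s' + 1 →
      (∀ a b : ℕ, a ≠ b → ¬ altList a b 5 <+ Cs.flatten) →
      Cs.flatten.length ≤ G1 * Cs.length + G2 * Cs.flatten.toFinset.card) :
    ∃ (Ts : List (List ℕ)) (lc g : ℕ),
      Ts.length = (chunk1 s' Bs).length ∧ (∀ C ∈ Ts, C.Nodup) ∧
      (∀ a b : ℕ, a ≠ b → ¬ altList a b 5 <+ Ts.flatten) ∧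
      Ts.flatten.toFinset.card ≤ g ∧ lc + g ≤ n ∧
      Bs.flatten.length ≤ (G1 + 3) * Bs.length + G2 * lc + 4 * g + Ts.flatten.length := by
  have hPf : (chunk1 s' Bs).flatten = Bs := chunk1_flatten s' Bs.length Bs le_rfl
  obtain ⟨Ts, LocS, GlobS, StartU, EndU, c1, c2, c3, c4, c5, c6, c7, c8, c9, c10, c11, cB⟩ :=
    core (chunk1 s' Bs) [] (s'+1) G1 G2
      (fun part hpart C hC => hnd C (by rw [← hPf]; exact List.mem_flatten.2 ⟨part, hpart, hC⟩))
      (fun part hpart => chunk1_parts s' Bs.length Bs le_rfl part hpart)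
      (by
        intro a b hab hsub
        rw [hPf] at hsub
        simp only [List.nil_append] at hsub
        exact hNA a b hab hsub)
      Hloc
  rw [hPf] at c3 c7 c8 cB
  refine ⟨Ts, LocS.card, GlobS.card, c1, c2, noalt_sublist c3 hNA,
    Finset.card_le_card c4, ?_, ?_⟩
  · rw [← Finset.card_union_of_disjoint c9]
    exact le_trans (Finset.card_le_card (Finset.union_subset c7 c8)) hcard
  · have hsU : StartU.card ≤ GlobS.card := Finset.card_le_card c5
    have heU : EndU.card ≤ GlobS.card := Finset.card_le_card c6
    omega

def Phi (K j : ℕ) : Prop := ∀ (Bs : List (List ℕ)) (n : ℕ),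
  (∀ C ∈ Bs, C.Nodup) → Bs.flatten.toFinset.card ≤ n →
  (∀ a b : ℕ, a ≠ b → ¬ altList a b 5 <+ Bs.flatten) →
  Bs.length ≤ Ak K j → Bs.flatten.length ≤ fC K * j * Bs.length + 4 * K * n

lemma phi_mono_j (K j : ℕ) (h : Phi K j) (hmono : Ak K j ≤ Ak K (j+1)) : True := trivial

lemma phi2 : ∀ j, Phi 2 j := by
  intro j
  induction j with
  | zero =>
    intro Bs n hnd hcard hNA hlen
    have h1 : Bs.length ≤ 1 := hlen
    have := single_block Bs n h1 hnd hcard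
    omega
  | succ j ih =>
    intro Bs n hnd hcard hNA hlen
    set s := Ak 2 j with hs
    have hs1 : 1 ≤ s := ak_ge_one 0 j
    have hsucc : Ak 2 (j+1) = 2 * s := by
      rw [ak_succ 0 j]; rfl
    by_cases hsmall : Bs.length ≤ s
    · have := ih Bs n hnd hcard hNA hsmall
      have hmul : fC 2 * j * Bs.length ≤ fC 2 * (j+1) * Bs.length := by
        apply Nat.mul_le_mul_right
        exact Nat.mul_le_mul_left _ (by omega)
      omega
    · push_neg at hsmall
      obtain ⟨Ts, lc, g, t1, t2, t3, t4, t5, t6⟩ :=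
        split_step (s - 1) (fC 2 * j) (4 * 2) n Bs hnd hcard hNA
          (by
            intro Cs hcnd hclen hcna
            have : Cs.length ≤ Ak 2 j := by omega
            exact ih Cs Cs.flatten.toFinset.card hcnd le_rfl hcna this)
      -- number of chunks is at most 2
      have hcount := chunk1_count (s-1) Bs.length Bs le_rfl
        (by intro hcon; rw [hcon] at hsmall; simp at hsmall)
      have hs' : s - 1 + 1 = s := by omega
      rw [hs'] at hcount
      have hb2 : (chunk1 (s-1) Bs).length ≤ 2 := by
        by_contra hcon
        push_neg at hcon
        have h2 : 2 * s ≤ ((chunk1 (s-1) Bs).length - 1) * s :=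
          Nat.mul_le_mul_right s (by omega)
        have hlen2 : Bs.length ≤ 2 * s := by rw [← hsucc]; exact hlen
        omega
      have hTle : Ts.flatten.length ≤ 2 * g := by
        have := flatten_le_blocks_mul Ts g t2 t4
        have h2 : Ts.length * g ≤ 2 * g := Nat.mul_le_mul_right g (by omega)
        omega
      have e1 : (fC 2 * j + 3) * Bs.length = fC 2 * j * Bs.length + 3 * Bs.length := by ring
      have e2 : fC 2 * (j + 1) * Bs.length = fC 2 * j * Bs.length + fC 2 * Bs.length := by ring
      have e3 : 3 * Bs.length ≤ fC 2 * Bs.length := Nat.mul_le_mul_right _ (by have := fC_ge4 2; omega)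
      rw [e1] at t6
      omega

lemma phi_succ (κ : ℕ) (IHk : ∀ j, Phi (κ + 2) j) (phi2all : ∀ j, Phi 2 j) :
    ∀ j, Phi (κ + 3) j := by
  intro j
  induction j with
  | zero =>
    intro Bs n hnd hcard hNA hlen
    have := single_block Bs n hlen hnd hcard
    have h4 : n ≤ 4 * (κ + 3) * n := by nlinarith
    omega
  | succ j ih =>
    intro Bs n hnd hcard hNA hlen
    set s := Ak (κ + 3) j with hs
    have hs1 : 1 ≤ s := ak_ge_one (κ+1) j
    have hsucc : Ak (κ + 3) (j+1) = Ak (κ + 2) s := ak_succ (κ+1) j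
    by_cases hsmall : Bs.length ≤ s
    · have := ih Bs n hnd hcard hNA hsmall
      have hmul : fC (κ+3) * j * Bs.length ≤ fC (κ+3) * (j+1) * Bs.length := by
        apply Nat.mul_le_mul_right
        exact Nat.mul_le_mul_left _ (by omega)
      omega
    · push_neg at hsmall
      set b := (chunk1 (s-1) Bs).length with hbdef
      set t := invAk (κ + 2) b with htdef
      have hs' : s - 1 + 1 = s := by omega
      have hble : b ≤ Bs.length := chunk1_len_le (s-1) Bs.length Bs le_rfl
      have hcount := chunk1_count (s-1) Bs.length Bs le_rfl
        (by intro hcon; rw [hcon] at hsmall; simp at hsmall)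
      rw [hs'] at hcount
      have hts : t ≤ s := by
        apply invAk_le
        calc b ≤ Bs.length := hble
          _ ≤ Ak (κ+3) (j+1) := hlen
          _ = Ak (κ+2) s := hsucc
      by_cases hgood : fC (κ + 2) * t ≤ Bs.length
      · -- good case: recurse on the contracted sequence at level κ+2
        obtain ⟨Ts, lc, g, t1, t2, t3, t4, t5, t6⟩ :=
          split_step (s - 1) (fC (κ+3) * j) (4 * (κ+3)) n Bs hnd hcard hNA
            (by
              intro Cs hcnd hclen hcna
              have : Cs.length ≤ Ak (κ+3) j := by omega
              exact ih Cs Cs.flatten.toFinset.card hcnd le_rfl hcna this)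
        rw [← hbdef] at t1
        have hTbound : Ts.flatten.length ≤ fC (κ+2) * t * b + 4 * (κ+2) * g := by
          have := IHk t Ts g t2 t4 t3 (by rw [t1]; exact invAk_mem κ b)
          rwa [t1] at this
        -- arithmetic
        have hb1 : 1 ≤ b := by
          by_contra hcon
          push_neg at hcon
          interval_cases b
          · have hPf : (chunk1 (s-1) Bs).flatten = Bs := chunk1_flatten (s-1) Bs.length Bs le_rfl
            have : chunk1 (s-1) Bs = [] := List.length_eq_zero_iff.1 (by omega)
            rw [this] at hPf
            have : Bs.length = 0 := by rw [← hPf]; rfl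
            omega
        have htb : t * (b - 1) ≤ s * (b - 1) := Nat.mul_le_mul_right _ hts
        have hsb : s * (b-1) ≤ Bs.length - 1 := by
          have : (b-1) * s + 1 ≤ Bs.length := hcount
          rw [Nat.mul_comm] at this
          omega
        have key : fC (κ+2) * t * b ≤ fC (κ+2) * (Bs.length - 1) + Bs.length := by
          have e : t * b = t * (b - 1) + t := by
            have hb : b = (b - 1) + 1 := by omega
            conv_lhs => rw [hb]
            ring
          calc fC (κ+2) * t * b = fC (κ+2) * (t * b) := by ring
            _ = fC (κ+2) * (t * (b-1) + t) := by rw [e]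
            _ = fC (κ+2) * (t * (b-1)) + fC (κ+2) * t := by ring
            _ ≤ fC (κ+2) * (Bs.length - 1) + Bs.length := by
                have h1 : fC (κ+2) * (t * (b-1)) ≤ fC (κ+2) * (Bs.length - 1) :=
                  Nat.mul_le_mul_left _ (le_trans htb hsb)
                omega
        have hstep : fC (κ+2) + 4 ≤ fC (κ+3) := fC_step κ
        have e1 : (fC (κ+3) * j + 3) * Bs.length
            = fC (κ+3) * j * Bs.length + 3 * Bs.length := by ring
        have e2 : fC (κ+3) * (j + 1) * Bs.length
            = fC (κ+3) * j * Bs.length + fC (κ+3) * Bs.length := by ring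
        have e4 : (fC (κ+2) + 4) * Bs.length ≤ fC (κ+3) * Bs.length :=
          Nat.mul_le_mul_right _ hstep
        have e5 : (fC (κ+2) + 4) * Bs.length
            = fC (κ+2) * Bs.length + 4 * Bs.length := by ring
        have e6 : fC (κ+2) * (Bs.length - 1) ≤ fC (κ+2) * Bs.length :=
          Nat.mul_le_mul_left _ (by omega)
        have e7 : 4 * (κ+3) * (lc + g) ≤ 4 * (κ+3) * n := Nat.mul_le_mul_left _ t5
        have e8 : 4 * (κ+3) * (lc + g) = 4 * (κ+3) * lc + 4 * (κ+3) * g := by ring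
        have e9 : 4 * (κ+2) * g + 4 * g = 4 * (κ + 3) * g := by ring
        rw [e1] at t6
        have hBs1 : 1 ≤ Bs.length := by omega
        have e10 : 3 * Bs.length + Bs.length = 4 * Bs.length := by ring
        omega
      · -- bad case: fall back to the base (k = 2) bound
        push_neg at hgood
        set j2 := invAk 2 Bs.length with hj2
        have htj2 : t ≤ j2 := le_trans (invAk_mono κ hble) (invAk_anti κ Bs.length)
        have hbad2 : Bs.length < fC (κ+2) * j2 :=
          lt_of_lt_of_le hgood (Nat.mul_le_mul_left _ htj2)
        have hj21 : 1 ≤ j2 := by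
          by_contra hcon
          push_neg at hcon
          interval_cases j2
          · simp at hbad2
        have hmin : 2 ^ (j2 - 1) < Bs.length := by
          by_contra hcon
          push_neg at hcon
          have := invAk_min Bs.length (j2 - 1) hcon
          omega
        have hnum := bad_numeric (fC (κ+2)) j2 hj21 (by omega)
        have hfb := fC_bad κ
        have hphi2 := phi2all j2 Bs n hnd hcard hNA (by rw [ak2_eq]; exact invAk_pow Bs.length)
        have hle1 : fC 2 * j2 ≤ fC (κ + 3) := by
          have : fC 2 = 4 := rfl
          rw [this]
          calc 4 * j2 ≤ 4 * (2 * Nat.clog 2 (fC (κ+2) + 1) + 12) := Nat.mul_le_mul_left _ hnum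
            _ ≤ 4 * (2 * Nat.clog 2 (fC (κ+2) + 1) + 13) := by omega
            _ ≤ fC (κ + 3) := hfb
        have hle2 : fC 2 * j2 * Bs.length ≤ fC (κ+3) * (j+1) * Bs.length := by
          apply Nat.mul_le_mul_right
          calc fC 2 * j2 ≤ fC (κ+3) := hle1
            _ = fC (κ+3) * 1 := (mul_one _).symm
            _ ≤ fC (κ+3) * (j+1) := Nat.mul_le_mul_left _ (by omega)
        have hle3 : 4 * 2 * n ≤ 4 * (κ+3) * n := Nat.mul_le_mul_right _ (by omega)
        omega

lemma phiAll : ∀ κ j, Phi (κ + 2) j := by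
  intro κ
  induction κ with
  | zero => exact phi2
  | succ κ ih => exact phi_succ κ ih phi2


lemma main_bound (k m n : ℕ) (hk : 2 ≤ k) (Bs : List (List ℕ)) (hBl : Bs.length ≤ m)
    (hnd : ∀ C ∈ Bs, C.Nodup) (hcard : Bs.flatten.toFinset.card ≤ n)
    (hna : ¬ ∃ a b : ℕ, a ≠ b ∧ (altList a b 5).Sublist Bs.flatten) :
    Bs.flatten.length ≤ 132 * (k * m * invAk k m + k * n) := by
  obtain ⟨κ, rfl⟩ : ∃ κ, k = κ + 2 := ⟨k - 2, by omega⟩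
  set j := invAk (κ+2) m with hj
  have hNA : ∀ a b : ℕ, a ≠ b → ¬ altList a b 5 <+ Bs.flatten := by
    intro a b hab hsub
    exact hna ⟨a, b, hab, hsub⟩
  have hlen : Bs.length ≤ Ak (κ+2) j := le_trans hBl (invAk_mem κ m)
  have h := phiAll κ j Bs n hnd hcard hNA hlen
  have hf : fC (κ+2) ≤ 128 * (κ+2) := le_trans (fC_le (κ+2)) (by omega)
  calc Bs.flatten.length ≤ fC (κ+2) * j * Bs.length + 4*(κ+2)*n := h
    _ ≤ 128*(κ+2) * j * m + 4*(κ+2)*n := by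
        have h1 : fC (κ+2) * j * Bs.length ≤ 128*(κ+2) * j * m :=
          Nat.mul_le_mul (Nat.mul_le_mul_right j hf) hBl
        omega
    _ ≤ 132 * ((κ+2) * m * j + (κ+2) * n) := by
        have e1 : 128*(κ+2) * j * m = 128*((κ+2)*m*j) := by ring
        have e2 : 4*(κ+2)*n = 4*((κ+2)*n) := by ring
        have e3 : 132 * ((κ+2)*m*j + (κ+2)*n) = 132*((κ+2)*m*j) + 132*((κ+2)*n) := by ring
        omega

end DS

/-- There is an absolute constant `c` with `ψ_3(m,n) ≤ c·(k·m·α_k(m) + k·n)` for all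
`k ≥ 2`, `m, n ≥ 1`. -/
theorem psi3_upper :
    ∃ c : ℝ, ∀ k m n : ℕ, 2 ≤ k → 1 ≤ m → 1 ≤ n →
      (psiDS 3 m n : ℝ) ≤ c * ((k : ℝ) * (m : ℝ) * (invAk k m : ℝ) + (k : ℝ) * (n : ℝ)) := by
  refine ⟨132, ?_⟩
  intro k m n hk hm hn
  have hnat : psiDS 3 m n ≤ 132 * (k * m * invAk k m + k * n) := by
    apply csSup_le'
    rintro L ⟨S, hDS, hcard, hBlocks, rfl⟩
    obtain ⟨Bs, hBl, rfl, hnd⟩ := hBlocks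
    exact DS.main_bound k m n hk Bs hBl hnd hcard hDS.2
  exact_mod_cast hnat
end

section
/- For every integer m ≥ 1, N^1_2(m) = m − 1; that is, every ADS^1_2(m)-sequence has at most m − 1 distinct symbols, and for every m ≥ 2 there exists an ADS^1_2(m)-sequence with exactly m − 1 distinct symbols. -/
/-- Number of adjacent equal pairs. -/
def nae : List ℕ → ℕ
  | [] => 0
  | [_] => 0
  | a :: b :: t => (if a = b then 1 else 0) + nae (b :: t)

lemma nae_cons_le (x : ℕ) (L : List ℕ) : nae (x :: L) ≤ 1 + nae L := by
  cases L with
  | nil => simp [nae]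
  | cons y t => simp only [nae]; split <;> omega

lemma nae_le_cons (x : ℕ) (L : List ℕ) : nae L ≤ nae (x :: L) := by
  cases L with
  | nil => simp [nae]
  | cons y t => simp only [nae]; omega

lemma nae_nodup : ∀ {B : List ℕ}, B.Nodup → nae B = 0
  | [], _ => rfl
  | [_], _ => rfl
  | a :: b :: t, h => by
    have hab : a ≠ b := by simp [List.nodup_cons] at h; tauto
    have ht : (b :: t).Nodup := h.of_cons
    simp [nae, hab, nae_nodup ht]

lemma nae_append : ∀ (B T : List ℕ), nae (B ++ T) ≤ nae B + nae T + 1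
  | [], T => by simp [nae]
  | [x], T => by
    have h := nae_cons_le x T
    have h0 : nae [x] = 0 := rfl
    have e : ([x] : List ℕ) ++ T = x :: T := rfl
    rw [e, h0]
    omega
  | x :: y :: B, T => by
    have h := nae_append (y :: B) T
    have e1 : (x :: y :: B) ++ T = x :: y :: (B ++ T) := rfl
    have e2 : (y :: B) ++ T = y :: (B ++ T) := rfl
    rw [e2] at h
    rw [e1]
    show (if x = y then 1 else 0) + nae (y :: (B ++ T)) ≤
      ((if x = y then 1 else 0) + nae (y :: B)) + nae T + 1
    omega

lemma nae_flatten : ∀ (Bs : List (List ℕ)), (∀ B ∈ Bs, B.Nodup) →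
    nae Bs.flatten ≤ Bs.length - 1
  | [], _ => by simp [nae]
  | [B], h => by
    simp only [List.flatten, List.append_nil]
    simp [nae_nodup (h B (by simp))]
  | B :: B' :: Bs, h => by
    have h1 : nae B = 0 := nae_nodup (h B (by simp))
    have h2 := nae_flatten (B' :: Bs) (fun C hC => h C (by simp [hC]))
    have h3 := nae_append B (B' :: Bs).flatten
    simp only [List.flatten_cons] at *
    simp only [List.length_cons] at *
    omega

lemma hasAlt_mono_s10 {L M : List ℕ} {l : ℕ} (h : L.Sublist M) : HasAlt L l → HasAlt M l := by
  rintro ⟨a, b, hab, hs⟩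
  exact ⟨a, b, hab, hs.trans h⟩

lemma headRun : ∀ (S : List ℕ) (a : ℕ), ¬ HasAlt (a :: S) 3 →
    ∃ k Z, a :: S = List.replicate k a ++ Z ∧ a ∉ Z
  | [], a, _ => ⟨1, [], by simp⟩
  | d :: S'', a, h => by
    by_cases hd : d = a
    · subst hd
      have hsub : (d :: S'').Sublist (d :: d :: S'') := (d :: S'').sublist_cons_self d
      obtain ⟨k, Z, heq, hZ⟩ := headRun S'' d (fun hh => h (hasAlt_mono_s10 hsub hh))
      exact ⟨k + 1, Z, by rw [List.replicate_succ, List.cons_append, ← heq], hZ⟩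
    · by_cases ha : a ∈ S''
      · exfalso
        apply h
        refine ⟨a, d, fun hh => hd hh.symm, ?_⟩
        show (a :: d :: [a]).Sublist (a :: d :: S'')
        exact (List.singleton_sublist.mpr ha).cons₂ d |>.cons₂ a
      · refine ⟨1, d :: S'', by simp, ?_⟩
        simp only [List.mem_cons]
        rintro (rfl | hh)
        · exact hd rfl
        · exact ha hh

lemma nae_replicate_append (a : ℕ) (Z : List ℕ) : ∀ j, nae Z ≤ nae (List.replicate j a ++ Z)
  | 0 => le_refl _
  | j + 1 => by
    have h1 := nae_replicate_append a Z j
    have h2 := nae_le_cons a (List.replicate j a ++ Z)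
    rw [List.replicate_succ, List.cons_append]
    omega

lemma card_le_nae : ∀ (n : ℕ) (S : List ℕ), S.length ≤ n → ¬ HasAlt S 3 →
    (∀ a ∈ S, 2 ≤ S.count a) → S.toFinset.card ≤ nae S := by
  intro n
  induction n with
  | zero =>
    intro S hS _ _
    have : S = [] := List.eq_nil_of_length_eq_zero (Nat.le_zero.mp hS)
    subst this; simp
  | succ n ih =>
    intro S hS halt hcount
    match S with
    | [] => simp
    | a :: S' =>
      obtain ⟨k, Z, heq, hZ⟩ := headRun S' a halt
      have hk : 2 ≤ k := by
        have h2 := hcount a (by simp)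
        rw [heq, List.count_append, List.count_replicate_self,
          List.count_eq_zero_of_not_mem hZ] at h2
        omega
      have hlen : S'.length + 1 = k + Z.length := by
        have := congrArg List.length heq
        simpa using this
      have hZlen : Z.length ≤ n := by
        simp only [List.length_cons] at hS
        omega
      have hZsub : Z.Sublist (a :: S') := heq ▸ List.sublist_append_right _ Z
      have hZalt : ¬ HasAlt Z 3 := fun hh => halt (hasAlt_mono_s10 hZsub hh)
      have hZcount : ∀ b ∈ Z, 2 ≤ Z.count b := by
        intro b hb
        have hba : b ≠ a := fun hh => hZ (hh ▸ hb)
        have hc2 := hcount b (hZsub.subset hb)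
        rw [heq, List.count_append] at hc2
        have h0 : (List.replicate k a).count b = 0 :=
          List.count_eq_zero_of_not_mem (by simp [List.mem_replicate, hba])
        omega
      have hcard := ih Z hZlen hZalt hZcount
      have hc : (a :: S').toFinset.card ≤ 1 + Z.toFinset.card := by
        rw [heq]
        have hsubs : (List.replicate k a ++ Z).toFinset ⊆ insert a Z.toFinset := by
          intro x hx
          simp only [List.toFinset_append, Finset.mem_union, List.mem_toFinset,
            List.mem_replicate, Finset.mem_insert] at *
          tauto
        calc (List.replicate k a ++ Z).toFinset.card ≤ (insert a Z.toFinset).card :=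
              Finset.card_le_card hsubs
          _ ≤ 1 + Z.toFinset.card := by
              rw [Nat.add_comm]; exact Finset.card_insert_le _ _
      have hn : 1 + nae Z ≤ nae (a :: S') := by
        rw [heq]
        have h3 : List.replicate k a ++ Z = a :: a :: (List.replicate (k - 2) a ++ Z) := by
          have hkk : k = (k - 2) + 1 + 1 := by omega
          rw [hkk]
          simp [List.replicate_succ]
        rw [h3]
        have h4 : nae (a :: a :: (List.replicate (k-2) a ++ Z))
            = 1 + nae (a :: (List.replicate (k-2) a ++ Z)) := by simp [nae]
        have h5 : (a :: (List.replicate (k-2) a ++ Z)) = List.replicate (k-1) a ++ Z := by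
          have hkk : k - 1 = (k - 2) + 1 := by omega
          rw [hkk, List.replicate_succ, List.cons_append]
        rw [h4, h5]
        have := nae_replicate_append a Z (k-1)
        omega
      omega

lemma ads_card_le {m : ℕ} {S : List ℕ} (h : IsADS 1 2 m S) : S.toFinset.card ≤ m - 1 := by
  obtain ⟨⟨Bs, hlen, hflat, hnodup⟩, hcount, halt⟩ := h
  have h1 : S.toFinset.card ≤ nae S := card_le_nae S.length S le_rfl halt hcount
  have h2 : nae S ≤ Bs.length - 1 := hflat ▸ nae_flatten Bs hnodup
  omega

/-- Extremal example block structure. -/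
def eb (n : ℕ) : List (List ℕ) := [0] :: ((List.range n).map (fun i => [i, i+1]) ++ [[n]])

def Dex (n : ℕ) : List ℕ := (eb n).flatten

lemma Dex_zero : Dex 0 = [0, 0] := rfl

lemma Dex_succ (n : ℕ) : Dex (n+1) = Dex n ++ [n+1, n+1] := by
  simp [Dex, eb, List.range_succ]

lemma mem_Dex {a n : ℕ} : a ∈ Dex n ↔ a ≤ n := by
  induction n with
  | zero => simp [Dex_zero]
  | succ n ih => simp [Dex_succ, ih]; omega

lemma count_Dex : ∀ (n a : ℕ), a ≤ n → (Dex n).count a = 2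
  | 0, a, h => by
    have : a = 0 := by omega
    subst this; simp [Dex_zero]
  | n + 1, a, h => by
    rw [Dex_succ, List.count_append]
    by_cases ha : a ≤ n
    · have h2 : a ≠ n + 1 := by omega
      rw [count_Dex n a ha]
      simp [List.count_cons, h2]; omega
    · have hh : a = n + 1 := by omega
      have hnm : a ∉ Dex n := by rw [mem_Dex]; omega
      rw [List.count_eq_zero_of_not_mem hnm]
      simp [List.count_cons, hh]

lemma noalt_Dex (n : ℕ) : ¬ HasAlt (Dex n) 3 := by
  induction n with
  | zero =>
    rintro ⟨a, b, hab, hs⟩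
    have hs' : ([a, b, a] : List ℕ).Sublist (Dex 0) := hs
    have := hs'.length_le
    simp [Dex_zero] at this
  | succ n ih =>
    rintro ⟨a, b, hab, hs⟩
    have hs' : ([a, b, a] : List ℕ).Sublist (Dex n ++ [n+1, n+1]) := by
      rw [← Dex_succ]; exact hs
    rw [List.sublist_append_iff] at hs'
    obtain ⟨l1, l2, heq, h1, h2⟩ := hs'
    have hmem2 : ∀ x ∈ l2, x = n + 1 := by
      intro x hx
      have hx2 := h2.subset hx
      simp at hx2
      tauto
    match l2, heq with
    | [], heq =>
      have hl1 : [a, b, a] = l1 := by simpa using heq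
      rw [← hl1] at h1
      exact ih ⟨a, b, hab, h1⟩
    | [x], heq =>
      have heq' : [a, b] ++ [a] = l1 ++ [x] := heq
      obtain ⟨hl1, hx⟩ := List.append_inj' heq' rfl
      have hxa : x = a := by simpa using hx.symm
      have ha1 : a = n + 1 := hxa ▸ hmem2 x (by simp)
      have haD : a ∈ Dex n := h1.subset (by rw [← hl1]; simp)
      rw [mem_Dex] at haD
      omega
    | [x, y], heq =>
      have heq' : [a] ++ [b, a] = l1 ++ [x, y] := heq
      obtain ⟨hl1, hxy⟩ := List.append_inj' heq' rfl
      have hbx : b = x := by simpa using congrArg (List.getD · 0 0) hxy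
      have hay : a = y := by simpa using congrArg (List.getD · 1 0) hxy
      have hb1 : b = n + 1 := hbx ▸ hmem2 x (by simp)
      have ha1 : a = n + 1 := hay ▸ hmem2 y (by simp)
      exact hab (ha1.trans hb1.symm)
    | x :: y :: z :: t, heq =>
      have := h2.length_le
      simp at this

lemma isADS_Dex (n : ℕ) : IsADS 1 2 (n + 2) (Dex n) := by
  refine ⟨⟨eb n, by simp [eb], rfl, ?_⟩, ?_, ?_⟩
  · intro B hB
    simp [eb] at hB
    rcases hB with rfl | ⟨i, _, rfl⟩ | rfl <;> simp
  · intro a ha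
    have := count_Dex n a (mem_Dex.mp ha)
    show 2 ≤ (Dex n).count a
    omega
  · exact noalt_Dex n

lemma card_Dex (n : ℕ) : (Dex n).toFinset.card = n + 1 := by
  have h : (Dex n).toFinset = Finset.range (n + 1) := by
    ext a
    simp [mem_Dex, Finset.mem_range]
  rw [h, Finset.card_range]

lemma isADS_nil (m : ℕ) : IsADS 1 2 m [] := by
  refine ⟨⟨[], by simp, rfl, by simp⟩, by simp, ?_⟩
  rintro ⟨a, b, hab, hs⟩
  have h3 : altList a b (1 + 2) = [a, b, a] := rfl
  rw [h3] at hs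
  simp at hs

/-- `N^1_2(m) = m − 1`: every `ADS^1_2(m)`-sequence has at most `m − 1` distinct symbols,
and for `m ≥ 2` some `ADS^1_2(m)`-sequence has exactly `m − 1` distinct symbols. -/
theorem NADS_one_two :
    ∀ m : ℕ, 1 ≤ m →
      NADS 1 2 m = ((m - 1 : ℕ) : ℕ∞) ∧
      (2 ≤ m → ∃ S : List ℕ, IsADS 1 2 m S ∧ S.toFinset.card = m - 1) := by
  intro m hm
  have hex : ∃ S : List ℕ, IsADS 1 2 m S ∧ S.toFinset.card = m - 1 := by
    by_cases hm2 : 2 ≤ m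
    · refine ⟨Dex (m - 2), ?_, ?_⟩
      · have := isADS_Dex (m - 2)
        have hmm : m - 2 + 2 = m := by omega
        rwa [hmm] at this
      · rw [card_Dex]; omega
    · have : m = 1 := by omega
      subst this
      exact ⟨[], isADS_nil 1, by simp⟩
  constructor
  · apply le_antisymm
    · apply sSup_le
      rintro c ⟨S, hS, rfl⟩
      exact_mod_cast Nat.cast_le.mpr (ads_card_le hS)
    · obtain ⟨S, hS, hcard⟩ := hex
      apply le_sSup
      exact ⟨S, hS, by rw [hcard]⟩
  · intro _; exact hex
end

section
/- For all integers s ≥ 2 and m ≥ 2, N^s_{s+1}(m) ≤ C(m−2, s−1), the binomial coefficient (m−2 choose s−1). -/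
namespace NADSHelp



lemma mem_getD_flatten {x : ℕ} {Cs : List (List ℕ)} {k : ℕ}
    (h : x ∈ Cs.getD k []) : x ∈ Cs.flatten := by
  by_cases hk : k < Cs.length
  · rw [List.getD_eq_getElem _ _ hk] at h
    exact List.mem_flatten.2 ⟨_, List.getElem_mem hk, h⟩
  · rw [List.getD_eq_default _ _ (le_of_not_gt hk)] at h
    simp at h

lemma getD_take {Cs : List (List ℕ)} {j n : ℕ} (h : j < n) :
    (Cs.take n).getD j [] = Cs.getD j [] := by
  simp only [List.getD_eq_getElem?_getD, List.getElem?_take, h, if_true]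

lemma getD_drop (Cs : List (List ℕ)) (c n : ℕ) :
    (Cs.drop c).getD n [] = Cs.getD (c + n) [] := by
  simp [List.getD_eq_getElem?_getD, List.getElem?_drop]

lemma mem_take_flatten {x : ℕ} {Cs : List (List ℕ)} {j n : ℕ}
    (h : x ∈ Cs.getD j []) (hj : j < n) : x ∈ (Cs.take n).flatten :=
  mem_getD_flatten (k := j) (by rwa [getD_take hj])

lemma pair_sublist {a b : ℕ} {l : List ℕ} (hab : a ≠ b) (ha : a ∈ l) (hb : b ∈ l) :
    [a, b].Sublist l ∨ [b, a].Sublist l := by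
  induction l with
  | nil => simp at ha
  | cons h t ih =>
    by_cases hah : a = h
    · subst hah
      have hbt : b ∈ t := by
        rcases List.mem_cons.1 hb with h1 | h1
        · exact absurd h1.symm hab
        · exact h1
      exact Or.inl (List.Sublist.cons₂ a (List.singleton_sublist.2 hbt))
    · by_cases hbh : b = h
      · subst hbh
        have hat : a ∈ t := by
          rcases List.mem_cons.1 ha with h1 | h1
          · exact absurd h1 hah
          · exact h1
        exact Or.inr (List.Sublist.cons₂ b (List.singleton_sublist.2 hat))
      · have hat : a ∈ t := by
          rcases List.mem_cons.1 ha with h1 | h1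
          · exact absurd h1 hah
          · exact h1
        have hbt : b ∈ t := by
          rcases List.mem_cons.1 hb with h1 | h1
          · exact absurd h1 hbh
          · exact h1
        rcases ih hat hbt with h1 | h1
        · exact Or.inl (h1.cons h)
        · exact Or.inr (h1.cons h)

lemma alt_sublist : ∀ (J : List ℕ) (x y c : ℕ) (Cs : List (List ℕ)),
    J.Pairwise (· < ·) → (∀ j ∈ J, c ≤ j) →
    (∀ j ∈ J, x ∈ Cs.getD j [] ∧ y ∈ Cs.getD j []) →
    (∃ k, (∀ j ∈ J, j < k) ∧ c ≤ k ∧ (if Even J.length then x else y) ∈ Cs.getD k []) →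
    (altList x y (J.length + 1)).Sublist ((Cs.drop c).flatten)
  | [], x, y, c, Cs, _, _, _, hfin => by
    obtain ⟨k, -, hck, hk⟩ := hfin
    rw [if_pos (by simp : Even ([] : List ℕ).length)] at hk
    have : x ∈ (Cs.drop c).getD (k - c) [] := by
      rw [getD_drop, Nat.add_sub_cancel' hck]; exact hk
    simpa [altList] using List.singleton_sublist.2 (mem_getD_flatten this)
  | j :: J', x, y, c, Cs, hsort, hc, hblk, hfin => by
    have hcj : c ≤ j := hc j (by simp)
    have hjJ' : ∀ j' ∈ J', j < j' := fun j' hj' => List.rel_of_pairwise_cons hsort hj'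
    have hx : x ∈ Cs.getD j [] := (hblk j (by simp)).1
    -- head : [x] <+ flatten ((Cs.drop c).take (j - c + 1))
    have hxd : x ∈ (Cs.drop c).getD (j - c) [] := by
      rw [getD_drop, Nat.add_sub_cancel' hcj]; exact hx
    have hhead : [x].Sublist (((Cs.drop c).take (j - c + 1)).flatten) :=
      List.singleton_sublist.2 (mem_take_flatten hxd (Nat.lt_succ_self _))
    -- tail by "IH"
    have htail : (altList y x (J'.length + 1)).Sublist ((Cs.drop (j + 1)).flatten) := by
      apply alt_sublist J' y x (j + 1) Cs (List.pairwise_cons.1 hsort).2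
        (fun j' hj' => hjJ' j' hj')
        (fun j' hj' => ⟨(hblk j' (by simp [hj'])).2, (hblk j' (by simp [hj'])).1⟩)
      obtain ⟨k, hkgt, hck, hk⟩ := hfin
      refine ⟨k, fun j' hj' => hkgt j' (by simp [hj']), hkgt j (by simp), ?_⟩
      rcases Nat.even_or_odd J'.length with he | ho
      · rw [if_neg (by simp [List.length_cons, Nat.even_add_one, he])] at hk
        rw [if_pos he]; exact hk
      · rw [if_pos (by simp [List.length_cons, Nat.even_add_one, Nat.not_even_iff_odd.2 ho])] at hk
        rw [if_neg (Nat.not_even_iff_odd.2 ho)]; exact hk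
    have hdd : List.drop (j - c + 1) (Cs.drop c) = Cs.drop (j + 1) := by
      rw [List.drop_drop]
      congr 1
      omega
    have : (altList x y (J'.length + 1 + 1)).Sublist
        ((((Cs.drop c).take (j - c + 1)).flatten) ++ ((Cs.drop (j+1)).flatten)) := by
      show ([x] ++ altList y x (J'.length + 1)).Sublist _
      exact hhead.append htail
    rw [← hdd, ← List.flatten_append, List.take_append_drop] at this
    simpa using this



lemma sum_map_getD (g : List ℕ → ℕ) : ∀ (Bs : List (List ℕ)),
    (Bs.map g).sum = ∑ i ∈ Finset.range Bs.length, g (Bs.getD i [])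
  | [] => by simp
  | B :: Bs => by
    rw [List.map_cons, List.sum_cons, List.length_cons, Finset.sum_range_succ',
      sum_map_getD g Bs]
    simp [List.getD_cons_succ, List.getD_cons_zero, Nat.add_comm]

lemma count_eq_card_filter (Bs : List (List ℕ)) (hnd : ∀ B ∈ Bs, B.Nodup) (a : ℕ) :
    Bs.flatten.count a =
      ((Finset.range Bs.length).filter (fun i => a ∈ Bs.getD i [])).card := by
  rw [List.count_flatten, sum_map_getD, Finset.card_filter]
  refine Finset.sum_congr rfl fun i hi => ?_
  have hi' : i < Bs.length := Finset.mem_range.1 hi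
  have hBmem : Bs.getD i [] ∈ Bs := by
    rw [List.getD_eq_getElem _ _ hi']; exact List.getElem_mem hi'
  have hBnd := hnd _ hBmem
  by_cases hmem : a ∈ Bs.getD i []
  · rw [if_pos hmem]
    exact Nat.le_antisymm (List.nodup_iff_count_le_one.1 hBnd a)
      (Nat.succ_le_of_lt (List.count_pos_iff.2 hmem))
  · rw [if_neg hmem, List.count_eq_zero]
    exact hmem



def Tset (Bs : List (List ℕ)) (a : ℕ) : Finset ℕ :=
  (Finset.range Bs.length).filter (fun i => a ∈ Bs.getD i [])

noncomputable def LL (Bs : List (List ℕ)) (a : ℕ) : List ℕ := (Tset Bs a).sort (· ≤ ·)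

noncomputable def ee (Bs : List (List ℕ)) (a t : ℕ) : ℕ := (LL Bs a).getD t 0

noncomputable def midL (s : ℕ) (Bs : List (List ℕ)) (a : ℕ) : List ℕ :=
  ((LL Bs a).drop 1).take (s - 1)

lemma getD_take' {α : Type*} {l : List α} {d : α} {j n : ℕ} (h : j < n) :
    (l.take n).getD j d = l.getD j d := by
  simp only [List.getD_eq_getElem?_getD, List.getElem?_take, h, if_true]

lemma getD_drop' {α : Type*} (l : List α) (d : α) (c n : ℕ) :
    (l.drop c).getD n d = l.getD (c + n) d := by
  simp [List.getD_eq_getElem?_getD, List.getElem?_drop]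

lemma LL_sorted (Bs : List (List ℕ)) (a : ℕ) : (LL Bs a).Pairwise (· < ·) :=
  (Finset.sortedLT_sort _).pairwise

lemma ee_mono {Bs : List (List ℕ)} {a s : ℕ} (hl : s + 1 ≤ (LL Bs a).length)
    {t u : ℕ} (htu : t < u) (hus : u ≤ s) : ee Bs a t < ee Bs a u := by
  have hu : u < (LL Bs a).length := by omega
  have ht : t < (LL Bs a).length := by omega
  rw [ee, ee, List.getD_eq_getElem _ _ ht, List.getD_eq_getElem _ _ hu]
  exact List.pairwise_iff_getElem.1 (LL_sorted Bs a) t u ht hu htu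

lemma ee_mem_T {Bs : List (List ℕ)} {a s : ℕ} (hl : s + 1 ≤ (LL Bs a).length)
    {t : ℕ} (hts : t ≤ s) : ee Bs a t ∈ Tset Bs a := by
  have ht : t < (LL Bs a).length := by omega
  rw [ee, List.getD_eq_getElem _ _ ht]
  exact (Finset.mem_sort _).1 (List.getElem_mem ht)

lemma ee_lt_len {Bs : List (List ℕ)} {a s : ℕ} (hl : s + 1 ≤ (LL Bs a).length)
    {t : ℕ} (hts : t ≤ s) : ee Bs a t < Bs.length :=
  Finset.mem_range.1 (Finset.mem_filter.1 (ee_mem_T hl hts)).1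

lemma ee_block_mem {Bs : List (List ℕ)} {a s : ℕ} (hl : s + 1 ≤ (LL Bs a).length)
    {t : ℕ} (hts : t ≤ s) : a ∈ Bs.getD (ee Bs a t) [] :=
  (Finset.mem_filter.1 (ee_mem_T hl hts)).2

lemma midL_length {s : ℕ} {Bs : List (List ℕ)} {a : ℕ} (hl : s + 1 ≤ (LL Bs a).length) :
    (midL s Bs a).length = s - 1 := by
  rw [midL, List.length_take, List.length_drop]; omega

lemma midL_getD {s : ℕ} {Bs : List (List ℕ)} {a : ℕ} (hl : s + 1 ≤ (LL Bs a).length)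
    {u : ℕ} (hu : u < s - 1) : (midL s Bs a).getD u 0 = ee Bs a (u + 1) := by
  rw [midL, ee, getD_take' hu, getD_drop']
  congr 1
  omega

lemma midL_mem {s : ℕ} {Bs : List (List ℕ)} {a : ℕ} (hl : s + 1 ≤ (LL Bs a).length)
    {j : ℕ} (hj : j ∈ midL s Bs a) : ∃ t, 1 ≤ t ∧ t ≤ s - 1 ∧ j = ee Bs a t := by
  obtain ⟨u, hu, huj⟩ := List.mem_iff_getElem.1 hj
  have hu' : u < s - 1 := by rwa [midL_length hl] at hu
  refine ⟨u + 1, by omega, by omega, ?_⟩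
  rw [← midL_getD hl hu', List.getD_eq_getElem _ _ hu]
  exact huj.symm

lemma midL_sublist (s : ℕ) (Bs : List (List ℕ)) (a : ℕ) : (midL s Bs a).Sublist (LL Bs a) :=
  (List.take_sublist _ _).trans (List.drop_sublist _ _)

lemma midL_sorted (s : ℕ) (Bs : List (List ℕ)) (a : ℕ) : (midL s Bs a).Pairwise (· < ·) :=
  List.Pairwise.sublist (midL_sublist s Bs a) (LL_sorted Bs a)

lemma midL_nodup (s : ℕ) (Bs : List (List ℕ)) (a : ℕ) : (midL s Bs a).Nodup :=
  (midL_sorted s Bs a).nodup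


lemma core (s m : ℕ) (hs : 2 ≤ s) (hm : 2 ≤ m) (Bs : List (List ℕ))
    (hBlen : Bs.length ≤ m) (hnd : ∀ B ∈ Bs, B.Nodup)
    (hcount : ∀ a ∈ Bs.flatten, s + 1 ≤ Bs.flatten.count a)
    (hnoalt : ∀ x y : ℕ, x ≠ y → ¬ (altList x y (s + 2)).Sublist Bs.flatten) :
    Bs.flatten.toFinset.card ≤ (m - 2).choose (s - 1) := by
  classical
  have hLlen : ∀ a ∈ Bs.flatten, s + 1 ≤ (LL Bs a).length := by
    intro a ha
    rw [LL, Finset.length_sort, Tset, ← count_eq_card_filter Bs hnd a]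
    exact hcount a ha
  have hcard : Bs.flatten.toFinset.card ≤
      (Finset.powersetCard (s - 1) (Finset.Icc 1 (m - 2))).card := by
    apply Finset.card_le_card_of_injOn (fun a => (midL s Bs a).toFinset)
    · -- maps to
      intro a ha'
      have ha : a ∈ Bs.flatten := List.mem_toFinset.1 ha'
      have hl := hLlen a ha
      rw [Finset.mem_coe, Finset.mem_powersetCard]
      constructor
      · intro j hj
        have hj' : j ∈ midL s Bs a := List.mem_toFinset.1 hj
        obtain ⟨t, ht1, ht2, rfl⟩ := midL_mem hl hj'
        have h0 : ee Bs a 0 < ee Bs a t := ee_mono hl (by omega) (by omega)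
        have hts : ee Bs a t < ee Bs a s := ee_mono hl (by omega) le_rfl
        have hslt : ee Bs a s < Bs.length := ee_lt_len hl le_rfl
        rw [Finset.mem_Icc]
        omega
      · rw [List.toFinset_card_of_nodup (midL_nodup s Bs a), midL_length hl]
    · -- inj on
      intro a ha' b hb' hfeq
      by_contra hab
      have ha : a ∈ Bs.flatten := List.mem_toFinset.1 (Finset.mem_coe.1 ha')
      have hb : b ∈ Bs.flatten := List.mem_toFinset.1 (Finset.mem_coe.1 hb')
      have hla := hLlen a ha
      have hlb := hLlen b hb
      -- mid lists are equal
      have hMeq : midL s Bs a = midL s Bs b := by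
        have hsa : (midL s Bs a).Pairwise (· ≤ ·) :=
          (midL_sorted s Bs a).imp le_of_lt
        have hsb : (midL s Bs b).Pairwise (· ≤ ·) :=
          (midL_sorted s Bs b).imp le_of_lt
        have e1 := (List.toFinset_sort (· ≤ ·) (midL_nodup s Bs a)).2 hsa
        have e2 := (List.toFinset_sort (· ≤ ·) (midL_nodup s Bs b)).2 hsb
        rw [← e1, ← e2]
        exact congrArg (fun t => Finset.sort t (· ≤ ·)) hfeq
      set M := midL s Bs a with hM
      set c := ee Bs a 1 with hc
      have hMlen : M.length = s - 1 := midL_length hla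
      have hcb : c = ee Bs b 1 := by
        rw [hc, ← midL_getD hla (by omega : 0 < s - 1),
          show midL s Bs a = midL s Bs b from hMeq,
          midL_getD hlb (by omega : 0 < s - 1)]
      -- facts about M elements
      have hMa : ∀ j ∈ M, ∃ t, 1 ≤ t ∧ t ≤ s - 1 ∧ j = ee Bs a t := fun j hj =>
        midL_mem hla hj
      have hMb : ∀ j ∈ M, ∃ t, 1 ≤ t ∧ t ≤ s - 1 ∧ j = ee Bs b t := fun j hj =>
        midL_mem hlb (hMeq ▸ hj)
      have hcM : ∀ j ∈ M, c ≤ j := by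
        intro j hj
        obtain ⟨t, ht1, ht2, rfl⟩ := hMa j hj
        rcases Nat.eq_or_lt_of_le ht1 with h | h
        · rw [← h]
        · exact le_of_lt (ee_mono hla h (by omega))
      have hblk : ∀ j ∈ M, a ∈ Bs.getD j [] ∧ b ∈ Bs.getD j [] := by
        intro j hj
        obtain ⟨t, ht1, ht2, htj⟩ := hMa j hj
        obtain ⟨u, hu1, hu2, huj⟩ := hMb j hj
        exact ⟨htj ▸ ee_block_mem hla (by omega), huj ▸ ee_block_mem hlb (by omega)⟩
      have hka : ∃ k, (∀ j ∈ M, j < k) ∧ c ≤ k ∧ a ∈ Bs.getD k [] := by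
        refine ⟨ee Bs a s, ?_, le_of_lt (ee_mono hla (by omega) le_rfl), ee_block_mem hla le_rfl⟩
        intro j hj
        obtain ⟨t, ht1, ht2, rfl⟩ := hMa j hj
        exact ee_mono hla (by omega) le_rfl
      have hkb : ∃ k, (∀ j ∈ M, j < k) ∧ c ≤ k ∧ b ∈ Bs.getD k [] := by
        refine ⟨ee Bs b s, ?_, hcb ▸ le_of_lt (ee_mono hlb (by omega) le_rfl),
          ee_block_mem hlb le_rfl⟩
        intro j hj
        obtain ⟨t, ht1, ht2, rfl⟩ := hMb j hj
        exact ee_mono hlb (by omega) le_rfl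
      -- both a and b occur before block c
      have hapre : a ∈ (Bs.take c).flatten :=
        mem_take_flatten (ee_block_mem hla (by omega : (0:ℕ) ≤ s))
          (ee_mono hla (by omega) (by omega))
      have hbpre : b ∈ (Bs.take c).flatten :=
        mem_take_flatten (ee_block_mem hlb (by omega : (0:ℕ) ≤ s))
          (hcb ▸ ee_mono hlb (by omega) (by omega))
      -- the key construction
      have key : ∀ x y : ℕ, x ≠ y →
          (∀ j ∈ M, x ∈ Bs.getD j [] ∧ y ∈ Bs.getD j []) →
          (∃ k, (∀ j ∈ M, j < k) ∧ c ≤ k ∧ x ∈ Bs.getD k []) →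
          (∃ k, (∀ j ∈ M, j < k) ∧ c ≤ k ∧ y ∈ Bs.getD k []) →
          [x, y].Sublist ((Bs.take c).flatten) → False := by
        intro x y hxy hblk' hkx hky hpre
        have htail : (altList x y (M.length + 1)).Sublist ((Bs.drop c).flatten) := by
          apply alt_sublist M x y c Bs (hM ▸ midL_sorted s Bs a) hcM hblk'
          rcases Nat.even_or_odd M.length with hev | hod
          · obtain ⟨k, h1, h2, h3⟩ := hkx
            exact ⟨k, h1, h2, by rw [if_pos hev]; exact h3⟩
          · obtain ⟨k, h1, h2, h3⟩ := hky
            exact ⟨k, h1, h2, by rw [if_neg (Nat.not_even_iff_odd.2 hod)]; exact h3⟩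
        have hM1 : M.length + 1 = s := by omega
        rw [hM1] at htail
        have hfull : ([x, y] ++ altList x y s).Sublist
            ((Bs.take c).flatten ++ (Bs.drop c).flatten) := hpre.append htail
        rw [← List.flatten_append, List.take_append_drop] at hfull
        have hshape : altList x y (s + 2) = [x, y] ++ altList x y s := by
          show altList x y (s + 2) = x :: y :: altList x y s
          simp only [altList]
        exact hnoalt x y hxy (hshape ▸ hfull)
      rcases pair_sublist hab hapre hbpre with h | h
      · exact key a b hab hblk hka hkb h
      · exact key b a (Ne.symm hab) (fun j hj => ⟨(hblk j hj).2, (hblk j hj).1⟩) hkb hka h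
  calc Bs.flatten.toFinset.card ≤ _ := hcard
    _ = (m - 2).choose (s - 1) := by
        rw [Finset.card_powersetCard, Nat.card_Icc]
        simp

end NADSHelp

/-- For all `s ≥ 2` and `m ≥ 2`, `N^s_{s+1}(m) ≤ (m−2 choose s−1)`. -/
theorem NADS_succ_upper :
    ∀ s m : ℕ, 2 ≤ s → 2 ≤ m →
      NADS s (s + 1) m ≤ ((Nat.choose (m - 2) (s - 1) : ℕ) : ℕ∞) := by
  intro s m hs hm
  apply sSup_le
  rintro c ⟨S, ⟨⟨Bs, hBlen, hSflat, hBnodup⟩, hcount, hnoalt⟩, rfl⟩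
  have hkey : S.toFinset.card ≤ (m - 2).choose (s - 1) := by
    subst hSflat
    apply NADSHelp.core s m hs hm Bs hBlen hBnodup hcount
    intro x y hxy hsub
    exact hnoalt ⟨x, y, hxy, hsub⟩
  exact_mod_cast hkey
end

section
/- For all integers s ≥ 3, k ≥ 1, and m ≥ 1, N^s_{2k−1}(2m) ≤ 2·N^s_{2k−1}(m) + 2·N^{s−1}_k(m) (an inequality in the extended naturals). -/
lemma altList_append_one (a b : ℕ) :
    ∀ l, altList a b (l + 1) = altList a b l ++ [if l % 2 = 0 then a else b] := by
  intro l
  induction l generalizing a b with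
  | zero => simp [altList]
  | succ n ih =>
    show a :: altList b a (n + 1) = (a :: altList b a n) ++ _
    rw [ih b a]
    rcases Nat.mod_two_eq_zero_or_one n with h | h <;>
      simp [h, Nat.add_mod, List.cons_append]

lemma hasAlt_of_sublist {S T : List ℕ} {l : ℕ} (h : T.Sublist S) :
    HasAlt T l → HasAlt S l := by
  rintro ⟨a, b, hab, hs⟩
  exact ⟨a, b, hab, hs.trans h⟩

lemma hasBlocks_filter {S : List ℕ} {m : ℕ} (p : ℕ → Bool)
    (h : HasBlocks S m) : HasBlocks (S.filter p) m := by
  obtain ⟨Bs, hlen, hflat, hnd⟩ := h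
  refine ⟨Bs.map (List.filter p), by simpa using hlen, ?_, ?_⟩
  · rw [hflat]; exact List.filter_flatten ..
  · intro B hB
    obtain ⟨C, hC, rfl⟩ := List.mem_map.1 hB
    exact (hnd C hC).filter p

/-- For all `s ≥ 3`, `k ≥ 1`, `m ≥ 1`:
`N^s_{2k−1}(2m) ≤ 2·N^s_{2k−1}(m) + 2·N^{s−1}_k(m)` in the extended naturals. -/
theorem NADS_halving :
    ∀ s k m : ℕ, 3 ≤ s → 1 ≤ k → 1 ≤ m →
      NADS s (2 * k - 1) (2 * m) ≤ 2 * NADS s (2 * k - 1) m + 2 * NADS (s - 1) k m := by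
  intro s k m hs hk hm
  apply sSup_le
  rintro c ⟨S, ⟨hB, hcount, halt⟩, rfl⟩
  obtain ⟨Bs, hBlen, hSflat, hBnodup⟩ := hB
  set S1 := (Bs.take m).flatten with hS1
  set S2 := (Bs.drop m).flatten with hS2def
  have hS12 : S = S1 ++ S2 := by
    rw [hSflat, hS1, hS2def, ← List.flatten_append, List.take_append_drop]
  have hB1 : HasBlocks S1 m :=
    ⟨Bs.take m, by simp, rfl,
      fun B hB => hBnodup B (List.mem_of_mem_take hB)⟩
  have hB2 : HasBlocks S2 m :=
    ⟨Bs.drop m, by simp only [List.length_drop]; omega, rfl,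
      fun B hB => hBnodup B (List.mem_of_mem_drop hB)⟩
  have hcnt_split : ∀ a, S.count a = S1.count a + S2.count a := by
    intro a; rw [hS12, List.count_append]
  -- the four predicates
  set p1 : ℕ → Bool := fun x => decide (x ∉ S2) with hp1
  set p2 : ℕ → Bool := fun x => decide (x ∉ S1) with hp2
  set p3 : ℕ → Bool := fun x => decide (x ∈ S2 ∧ k ≤ S1.count x) with hp3
  set p4 : ℕ → Bool := fun x => decide (x ∈ S1 ∧ S1.count x < k) with hp4
  set T1 := S1.filter p1 with hT1
  set T2 := S2.filter p2 with hT2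
  set T3 := S1.filter p3 with hT3
  set T4 := S2.filter p4 with hT4
  have hsub1 : T1.Sublist S := (List.filter_sublist).trans (hS12 ▸ List.sublist_append_left _ _)
  have hsub2 : T2.Sublist S := (List.filter_sublist).trans (hS12 ▸ List.sublist_append_right _ _)
  have hsub3 : T3.Sublist S1 := List.filter_sublist
  have hsub4 : T4.Sublist S2 := List.filter_sublist
  -- shape of alternating lists
  obtain ⟨t, rfl⟩ : ∃ t, s = t + 3 := ⟨s - 3, by omega⟩
  have hADS1 : IsADS (t + 3) (2 * k - 1) m T1 := by
    refine ⟨hasBlocks_filter _ hB1, ?_, ?_⟩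
    · intro a ha
      have hmem := List.mem_filter.1 ha
      have hpa : a ∉ S2 := by simpa [hp1] using hmem.2
      have : S.count a = T1.count a := by
        rw [hcnt_split a, List.count_eq_zero.2 hpa, hT1, List.count_filter hmem.2]
        omega
      rw [← this]
      exact hcount a (hS12 ▸ List.mem_append_left _ hmem.1)
    · intro h
      exact halt (hasAlt_of_sublist hsub1 h)
  have hADS2 : IsADS (t + 3) (2 * k - 1) m T2 := by
    refine ⟨hasBlocks_filter _ hB2, ?_, ?_⟩
    · intro a ha
      have hmem := List.mem_filter.1 ha
      have hpa : a ∉ S1 := by simpa [hp2] using hmem.2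
      have : S.count a = T2.count a := by
        rw [hcnt_split a, List.count_eq_zero.2 hpa, hT2, List.count_filter hmem.2]
        omega
      rw [← this]
      exact hcount a (hS12 ▸ List.mem_append_right _ hmem.1)
    · intro h
      exact halt (hasAlt_of_sublist hsub2 h)
  have hADS3 : IsADS (t + 3 - 1) k m T3 := by
    refine ⟨hasBlocks_filter _ hB1, ?_, ?_⟩
    · intro a ha
      have hmem := List.mem_filter.1 ha
      have hpa : a ∈ S2 ∧ k ≤ S1.count a := by simpa [hp3] using hmem.2
      rw [hT3, List.count_filter hmem.2]
      exact hpa.2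
    · rintro ⟨a, b, hab, hsl⟩
      have hlen : t + 3 - 1 + 2 = (t + 3) + 1 := by omega
      rw [hlen] at hsl
      -- a and b belong to T3, hence to S2
      have hshape : altList a b (t + 3 + 1) = a :: b :: altList a b (t + 2) := rfl
      have haT : a ∈ T3 := hsl.subset (by rw [hshape]; simp)
      have hbT : b ∈ T3 := hsl.subset (by rw [hshape]; simp)
      have haS2 : a ∈ S2 := by
        have := (List.mem_filter.1 haT).2; simp only [hp3, decide_eq_true_eq] at this
        exact this.1
      have hbS2 : b ∈ S2 := by
        have := (List.mem_filter.1 hbT).2; simp only [hp3, decide_eq_true_eq] at this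
        exact this.1
      -- extend the alternation to length s + 2 inside S
      apply halt
      refine ⟨a, b, hab, ?_⟩
      have hext : altList a b (t + 3 + 2) =
          altList a b (t + 3 + 1) ++ [if (t + 3 + 1) % 2 = 0 then a else b] :=
        altList_append_one a b (t + 3 + 1)
      rw [hext, hS12]
      refine List.Sublist.append (hsl.trans hsub3) ?_
      rw [List.singleton_sublist]
      split <;> assumption
  have hADS4 : IsADS (t + 3 - 1) k m T4 := by
    refine ⟨hasBlocks_filter _ hB2, ?_, ?_⟩
    · intro a ha
      have hmem := List.mem_filter.1 ha
      have hpa : a ∈ S1 ∧ S1.count a < k := by simpa [hp4] using hmem.2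
      have haS : a ∈ S := hS12 ▸ List.mem_append_right _ hmem.1
      have h1 := hcount a haS
      have h2 := hcnt_split a
      rw [hT4, List.count_filter hmem.2]
      omega
    · rintro ⟨a, b, hab, hsl⟩
      have hlen : t + 3 - 1 + 2 = (t + 3) + 1 := by omega
      rw [hlen] at hsl
      have hshape : altList a b (t + 3 + 1) = a :: b :: altList a b (t + 2) := rfl
      have hbT : b ∈ T4 := hsl.subset (by rw [hshape]; simp)
      have hbS1 : b ∈ S1 := by
        have := (List.mem_filter.1 hbT).2; simp only [hp4, decide_eq_true_eq] at this
        exact this.1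
      -- prepend b to get an alternation of length s + 2
      apply halt
      refine ⟨b, a, hab.symm, ?_⟩
      have hext : altList b a (t + 3 + 2) = b :: altList a b (t + 3 + 1) := rfl
      rw [hext, hS12]
      exact List.Sublist.append (List.singleton_sublist.2 hbS1) (hsl.trans hsub4)
  -- covering
  have hcover : S.toFinset ⊆ T1.toFinset ∪ T2.toFinset ∪ T3.toFinset ∪ T4.toFinset := by
    intro a ha
    rw [List.mem_toFinset] at ha
    simp only [Finset.mem_union, List.mem_toFinset, hT1, hT2, hT3, hT4, List.mem_filter,
      hp1, hp2, hp3, hp4, decide_eq_true_eq]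
    have h1 := hcount a ha
    have h2 := hcnt_split a
    by_cases haS1 : a ∈ S1 <;> by_cases haS2 : a ∈ S2
    · by_cases hle : k ≤ S1.count a
      · exact Or.inl (Or.inr ⟨haS1, haS2, hle⟩)
      · exact Or.inr ⟨haS2, haS1, by omega⟩
    · exact Or.inl (Or.inl (Or.inl ⟨haS1, haS2⟩))
    · exact Or.inl (Or.inl (Or.inr ⟨haS2, haS1⟩))
    · exfalso
      rw [hS12, List.mem_append] at ha
      tauto
  have hcard : S.toFinset.card ≤
      T1.toFinset.card + T2.toFinset.card + T3.toFinset.card + T4.toFinset.card := by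
    calc S.toFinset.card ≤ (T1.toFinset ∪ T2.toFinset ∪ T3.toFinset ∪ T4.toFinset).card :=
          Finset.card_le_card hcover
      _ ≤ (T1.toFinset ∪ T2.toFinset ∪ T3.toFinset).card + T4.toFinset.card :=
          Finset.card_union_le _ _
      _ ≤ (T1.toFinset ∪ T2.toFinset).card + T3.toFinset.card + T4.toFinset.card := by
          have := Finset.card_union_le (T1.toFinset ∪ T2.toFinset) T3.toFinset; omega
      _ ≤ T1.toFinset.card + T2.toFinset.card + T3.toFinset.card + T4.toFinset.card := by
          have := Finset.card_union_le T1.toFinset T2.toFinset; omega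
  have hle1 : (T1.toFinset.card : ℕ∞) ≤ NADS (t + 3) (2 * k - 1) m := le_sSup ⟨T1, hADS1, rfl⟩
  have hle2 : (T2.toFinset.card : ℕ∞) ≤ NADS (t + 3) (2 * k - 1) m := le_sSup ⟨T2, hADS2, rfl⟩
  have hle3 : (T3.toFinset.card : ℕ∞) ≤ NADS (t + 3 - 1) k m := le_sSup ⟨T3, hADS3, rfl⟩
  have hle4 : (T4.toFinset.card : ℕ∞) ≤ NADS (t + 3 - 1) k m := le_sSup ⟨T4, hADS4, rfl⟩
  calc (S.toFinset.card : ℕ∞)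
      ≤ ((T1.toFinset.card + T2.toFinset.card + T3.toFinset.card + T4.toFinset.card : ℕ) : ℕ∞) := by
        exact_mod_cast hcard
    _ = (T1.toFinset.card : ℕ∞) + T2.toFinset.card + T3.toFinset.card + T4.toFinset.card := by
        push_cast; ring
    _ ≤ NADS (t + 3) (2 * k - 1) m + NADS (t + 3) (2 * k - 1) m
        + NADS (t + 3 - 1) k m + NADS (t + 3 - 1) k m :=
        add_le_add (add_le_add (add_le_add hle1 hle2) hle3) hle4
    _ = 2 * NADS (t + 3) (2 * k - 1) m + 2 * NADS (t + 3 - 1) k m := by ring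
end
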